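/- arXiv:1003.5458 — 5 statements merged into one kernel-verified Lean document; each statement's English description precedes it below -/
import Mathlib

section
/- If G is a cograph (contains no induced path on 4 vertices) and v is any vertex of G, then G * v is a cograph. -/
namespace SimpleGraph

variable {V W : Type*}

/-- Seidel complement of `G` at vertex `v`. -/
def seidel (G : SimpleGraph V) (v : V) : SimpleGraph V where
  Adj x y := Xor' (G.Adj x y)
    ((G.Adj v x ∧ ¬ G.Adj v y ∧ y ≠ v) ∨ (G.Adj v y ∧ ¬ G.Adj v x ∧ x ≠ v))
  symm := by
    constructor
    intro x y h
    unfold Xor' Xor at h ⊢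
    have hc := G.adj_comm x y
    tauto
  loopless := by
    constructor
    intro x h
    unfold Xor' Xor at h
    simp only [G.irrefl] at h
    tauto

/-- A module (homogeneous set in the weak sense) of a graph. -/
def IsModule (G : SimpleGraph V) (M : Set V) : Prop :=
  ∀ x ∉ M, (∀ y ∈ M, G.Adj x y) ∨ (∀ y ∈ M, ¬ G.Adj x y)

/-- A graph is prime w.r.t. modular decomposition. -/
def IsPrime (G : SimpleGraph V) [Fintype V] : Prop :=
  3 ≤ Fintype.card V ∧
    ∀ M : Set V, G.IsModule M → M = ∅ ∨ (∃ x, M = {x}) ∨ M = Set.univ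

/-- `G` has no induced subgraph isomorphic to `H`. -/
def IndFree (G : SimpleGraph V) (H : SimpleGraph W) : Prop :=
  IsEmpty (H ↪g G)

/-- The bull: triangle 0,1,2 with pendant vertices 3 (at 0) and 4 (at 1). -/
def bull : SimpleGraph (Fin 5) :=
  SimpleGraph.fromRel (fun x y =>
    (x, y) ∈ [((0 : Fin 5), (1 : Fin 5)), (1, 2), (0, 2), (0, 3), (1, 4)])

/-- The house: complement of the path on 5 vertices. -/
def house : SimpleGraph (Fin 5) := (pathGraph 5)ᶜ

/-- `G` is (P5, House, Bull)-free. -/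
def PHBFree (G : SimpleGraph V) : Prop :=
  G.IndFree (pathGraph 5) ∧ G.IndFree house ∧ G.IndFree bull

/-- The half graph: `b i` adjacent to `w j` iff `i + j ≤ m + 1` (1-based). -/
def halfGraph (m : ℕ) : SimpleGraph (Fin m ⊕ Fin m) :=
  SimpleGraph.fromRel (fun x y =>
    match x, y with
    | Sum.inl i, Sum.inr j => i.val + j.val < m
    | _, _ => False)

/-- A buoy partition of a set of vertices. -/
def IsBuoy (G : SimpleGraph V) (A : Fin 5 → Set V) : Prop :=
  (∀ i, (A i).Nonempty) ∧
  (∀ i j, i ≠ j → Disjoint (A i) (A j)) ∧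
  (∀ i, ∀ x ∈ A i, ∀ y ∈ A (i + 1), G.Adj x y) ∧
  (∀ i j, i ≠ j → j ≠ i + 1 → i ≠ j + 1 → ∀ x ∈ A i, ∀ y ∈ A j, ¬ G.Adj x y) ∧
  (∀ B : Fin 5 → Set V,
    ((∀ i j, i ≠ j → Disjoint (B i) (B j)) ∧
     (∀ i, ∀ x ∈ B i, ∀ y ∈ B (i + 1), G.Adj x y) ∧
     (∀ i j, i ≠ j → j ≠ i + 1 → i ≠ j + 1 → ∀ x ∈ B i, ∀ y ∈ B j, ¬ G.Adj x y) ∧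
     (∀ i, A i ⊆ B i)) → B = A)

end SimpleGraph


open SimpleGraph in
private lemma mkP4 {V : Type*} {G : SimpleGraph V} (hG : G.IndFree (pathGraph 4))
    {a b c d : V}
    (hab : G.Adj a b) (hbc : G.Adj b c) (hcd : G.Adj c d)
    (hac : ¬ G.Adj a c) (had : ¬ G.Adj a d) (hbd : ¬ G.Adj b d) : False := by
  have nab : a ≠ b := hab.ne
  have nbc : b ≠ c := hbc.ne
  have ncd : c ≠ d := hcd.ne
  have nac : a ≠ c := fun h => had (h ▸ hcd)
  have nad : a ≠ d := fun h => hbd (h ▸ hab.symm)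
  have nbd : b ≠ d := fun h => had (h ▸ hab)
  have hac' : ¬ G.Adj c a := fun h => hac h.symm
  have had' : ¬ G.Adj d a := fun h => had h.symm
  have hbd' : ¬ G.Adj d b := fun h => hbd h.symm
  refine hG.false ⟨⟨![a, b, c, d], ?_⟩, ?_⟩
  · intro i j hij
    fin_cases i <;> fin_cases j <;>
      simp_all [Matrix.cons_val_zero, Matrix.cons_val_one]
  · intro i j
    fin_cases i <;> fin_cases j <;>
      simp_all [pathGraph_adj, hab.symm, hbc.symm, hcd.symm, G.irrefl] <;> simp_all [DFunLike.coe, G.adj_comm]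

open SimpleGraph in
private lemma core {V : Type*} {G : SimpleGraph V} (hG : G.IndFree (pathGraph 4))
    {v a b c d : V}
    (nab : a ≠ b) (nac : a ≠ c) (nad : a ≠ d) (nbc : b ≠ c) (nbd : b ≠ d) (ncd : c ≠ d)
    (hab : Xor' (G.Adj a b)
      ((G.Adj v a ∧ ¬ G.Adj v b ∧ b ≠ v) ∨ (G.Adj v b ∧ ¬ G.Adj v a ∧ a ≠ v)))
    (hbc : Xor' (G.Adj b c)
      ((G.Adj v b ∧ ¬ G.Adj v c ∧ c ≠ v) ∨ (G.Adj v c ∧ ¬ G.Adj v b ∧ b ≠ v)))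
    (hcd : Xor' (G.Adj c d)
      ((G.Adj v c ∧ ¬ G.Adj v d ∧ d ≠ v) ∨ (G.Adj v d ∧ ¬ G.Adj v c ∧ c ≠ v)))
    (kac : ¬ Xor' (G.Adj a c)
      ((G.Adj v a ∧ ¬ G.Adj v c ∧ c ≠ v) ∨ (G.Adj v c ∧ ¬ G.Adj v a ∧ a ≠ v)))
    (kad : ¬ Xor' (G.Adj a d)
      ((G.Adj v a ∧ ¬ G.Adj v d ∧ d ≠ v) ∨ (G.Adj v d ∧ ¬ G.Adj v a ∧ a ≠ v)))
    (kbd : ¬ Xor' (G.Adj b d)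
      ((G.Adj v b ∧ ¬ G.Adj v d ∧ d ≠ v) ∨ (G.Adj v d ∧ ¬ G.Adj v b ∧ b ≠ v))) :
    False := by
  have hvv : ¬ G.Adj v v := G.loopless.irrefl v
  by_cases ha : a = v
  · subst ha
    have hb : b ≠ a := nab.symm
    have hc : c ≠ a := nac.symm
    have hd : d ≠ a := nad.symm
    simp only [Xor', Xor, ne_eq, hvv, hb, hc, hd, not_true, not_false_iff, true_and, and_true,
      false_and, and_false, or_false, false_or, not_not, not_false_eq_true,
      not_true_eq_false] at hab kac kad
    simp only [Xor', Xor, ne_eq, hab, kac, kad, hb, hc, hd, not_true, not_false_iff, true_and,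
      and_true, false_and, and_false, or_false, false_or, true_or, or_true, not_not,
      not_false_eq_true, not_true_eq_false] at hbc hcd kbd
    exact mkP4 hG hab kbd hcd.symm kad kac hbc
  by_cases hb : b = v
  · subst hb
    have ha' : a ≠ b := nab
    have hc : c ≠ b := nbc.symm
    have hd : d ≠ b := nbd.symm
    simp only [Xor', Xor, ne_eq, hvv, G.adj_comm b a, ha', hc, hd, not_true, not_false_iff,
      true_and, and_true, false_and, and_false, or_false, false_or, not_not,
      not_false_eq_true, not_true_eq_false] at hab hbc kbd
    simp only [Xor', Xor, ne_eq, G.adj_comm b a, hab, hbc, kbd, ha', hc, hd, not_true,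
      not_false_iff, true_and, and_true, false_and, and_false, or_false, false_or, true_or,
      or_true, not_not, not_false_eq_true, not_true_eq_false] at hcd kac kad
    exact mkP4 hG kad.symm hab hbc (fun h => kbd h.symm) (fun h => hcd h.symm) kac
  by_cases hc : c = v
  · subst hc
    have ha' : a ≠ c := nac
    have hb' : b ≠ c := nbc
    have hd : d ≠ c := ncd.symm
    simp only [Xor', Xor, ne_eq, hvv, G.adj_comm c a, G.adj_comm c b, ha', hb', hd, not_true,
      not_false_iff, true_and, and_true, false_and, and_false, or_false, false_or, not_not,
      not_false_eq_true, not_true_eq_false] at hbc hcd kac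
    simp only [Xor', Xor, ne_eq, G.adj_comm c a, G.adj_comm c b, hbc, hcd, kac, ha', hb', hd,
      not_true, not_false_iff, true_and, and_true, false_and, and_false, or_false, false_or,
      true_or, or_true, not_not, not_false_eq_true, not_true_eq_false] at hab kad kbd
    exact mkP4 hG kad hcd.symm hbc.symm kac hab (fun h => kbd h.symm)
  by_cases hd : d = v
  · subst hd
    have ha' : a ≠ d := nad
    have hb' : b ≠ d := nbd
    have hc' : c ≠ d := ncd
    simp only [Xor', Xor, ne_eq, hvv, G.adj_comm d a, G.adj_comm d b, G.adj_comm d c, ha', hb',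
      hc', not_true, not_false_iff, true_and, and_true, false_and, and_false, or_false,
      false_or, not_not, not_false_eq_true, not_true_eq_false] at hcd kad kbd
    simp only [Xor', Xor, ne_eq, G.adj_comm d a, G.adj_comm d b, G.adj_comm d c, hcd, kad, kbd,
      ha', hb', hc', not_true, not_false_iff, true_and, and_true, false_and, and_false,
      or_false, false_or, true_or, or_true, not_not, not_false_eq_true,
      not_true_eq_false] at hab hbc kac
    exact mkP4 hG hcd.symm kac.symm hab (fun h => kad h.symm) (fun h => kbd h.symm) (fun h => hbc h.symm)
  by_cases sa : G.Adj v a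
  ·
    by_cases sb : G.Adj v b
    ·
      by_cases sc : G.Adj v c
      ·
        by_cases sd : G.Adj v d
        · simp only [Xor', Xor, ne_eq, sa, sb, sc, sd, ha, hb, hc, hd, not_true, not_false_iff,
            true_and, and_true, false_and, and_false, or_false, false_or, true_or, or_true,
            not_not, iff_true, iff_false, not_or, not_and, eq_self_iff_true, not_false_eq_true,
            not_true_eq_false] at hab hbc hcd kac kad kbd
          exact mkP4 hG (hab) (hbc) (hcd) (kac) (kad) (kbd)
        · simp only [Xor', Xor, ne_eq, sa, sb, sc, sd, ha, hb, hc, hd, not_true, not_false_iff,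
            true_and, and_true, false_and, and_false, or_false, false_or, true_or, or_true,
            not_not, iff_true, iff_false, not_or, not_and, eq_self_iff_true, not_false_eq_true,
            not_true_eq_false] at hab hbc hcd kac kad kbd
          exact mkP4 hG (sc.symm) (sa) (kad) (fun h => kac h.symm) (hcd) (sd)
      ·
        by_cases sd : G.Adj v d
        · simp only [Xor', Xor, ne_eq, sa, sb, sc, sd, ha, hb, hc, hd, not_true, not_false_iff,
            true_and, and_true, false_and, and_false, or_false, false_or, true_or, or_true,
            not_not, iff_true, iff_false, not_or, not_and, eq_self_iff_true, not_false_eq_true,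
            not_true_eq_false] at hab hbc hcd kac kad kbd
          exact mkP4 hG (kac.symm) (sa.symm) (sd) (fun h => sc h.symm) (hcd) (kad)
        · simp only [Xor', Xor, ne_eq, sa, sb, sc, sd, ha, hb, hc, hd, not_true, not_false_iff,
            true_and, and_true, false_and, and_false, or_false, false_or, true_or, or_true,
            not_not, iff_true, iff_false, not_or, not_and, eq_self_iff_true, not_false_eq_true,
            not_true_eq_false] at hab hbc hcd kac kad kbd
          exact mkP4 hG (sb) (kbd) (hcd.symm) (sd) (sc) (hbc)
    ·
      by_cases sc : G.Adj v c
      ·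
        by_cases sd : G.Adj v d
        · simp only [Xor', Xor, ne_eq, sa, sb, sc, sd, ha, hb, hc, hd, not_true, not_false_iff,
            true_and, and_true, false_and, and_false, or_false, false_or, true_or, or_true,
            not_not, iff_true, iff_false, not_or, not_and, eq_self_iff_true, not_false_eq_true,
            not_true_eq_false] at hab hbc hcd kac kad kbd
          exact mkP4 hG (sa.symm) (sd) (kbd.symm) (kad) (hab) (sb)
        · simp only [Xor', Xor, ne_eq, sa, sb, sc, sd, ha, hb, hc, hd, not_true, not_false_iff,
            true_and, and_true, false_and, and_false, or_false, false_or, true_or, or_true,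
            not_not, iff_true, iff_false, not_or, not_and, eq_self_iff_true, not_false_eq_true,
            not_true_eq_false] at hab hbc hcd kac kad kbd
          exact mkP4 hG (sc.symm) (sa) (kad) (fun h => kac h.symm) (hcd) (sd)
      ·
        by_cases sd : G.Adj v d
        · simp only [Xor', Xor, ne_eq, sa, sb, sc, sd, ha, hb, hc, hd, not_true, not_false_iff,
            true_and, and_true, false_and, and_false, or_false, false_or, true_or, or_true,
            not_not, iff_true, iff_false, not_or, not_and, eq_self_iff_true, not_false_eq_true,
            not_true_eq_false] at hab hbc hcd kac kad kbd
          exact mkP4 hG (sa) (kac) (hbc.symm) (sc) (sb) (hab)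
        · simp only [Xor', Xor, ne_eq, sa, sb, sc, sd, ha, hb, hc, hd, not_true, not_false_iff,
            true_and, and_true, false_and, and_false, or_false, false_or, true_or, or_true,
            not_not, iff_true, iff_false, not_or, not_and, eq_self_iff_true, not_false_eq_true,
            not_true_eq_false] at hab hbc hcd kac kad kbd
          exact mkP4 hG (sa) (kac) (hbc.symm) (sc) (sb) (hab)
  ·
    by_cases sb : G.Adj v b
    ·
      by_cases sc : G.Adj v c
      ·
        by_cases sd : G.Adj v d
        · simp only [Xor', Xor, ne_eq, sa, sb, sc, sd, ha, hb, hc, hd, not_true, not_false_iff,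
            true_and, and_true, false_and, and_false, or_false, false_or, true_or, or_true,
            not_not, iff_true, iff_false, not_or, not_and, eq_self_iff_true, not_false_eq_true,
            not_true_eq_false] at hab hbc hcd kac kad kbd
          exact mkP4 hG (kad) (sd.symm) (sb) (fun h => sa h.symm) (hab) (fun h => kbd h.symm)
        · simp only [Xor', Xor, ne_eq, sa, sb, sc, sd, ha, hb, hc, hd, not_true, not_false_iff,
            true_and, and_true, false_and, and_false, or_false, false_or, true_or, or_true,
            not_not, iff_true, iff_false, not_or, not_and, eq_self_iff_true, not_false_eq_true,
            not_true_eq_false] at hab hbc hcd kac kad kbd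
          exact mkP4 hG (kac) (hbc.symm) (kbd) (hab) (kad) (hcd)
      ·
        by_cases sd : G.Adj v d
        · simp only [Xor', Xor, ne_eq, sa, sb, sc, sd, ha, hb, hc, hd, not_true, not_false_iff,
            true_and, and_true, false_and, and_false, or_false, false_or, true_or, or_true,
            not_not, iff_true, iff_false, not_or, not_and, eq_self_iff_true, not_false_eq_true,
            not_true_eq_false] at hab hbc hcd kac kad kbd
          exact mkP4 hG (kad) (sd.symm) (sb) (fun h => sa h.symm) (hab) (fun h => kbd h.symm)
        · simp only [Xor', Xor, ne_eq, sa, sb, sc, sd, ha, hb, hc, hd, not_true, not_false_iff,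
            true_and, and_true, false_and, and_false, or_false, false_or, true_or, or_true,
            not_not, iff_true, iff_false, not_or, not_and, eq_self_iff_true, not_false_eq_true,
            not_true_eq_false] at hab hbc hcd kac kad kbd
          exact mkP4 hG (sb) (kbd) (hcd.symm) (sd) (sc) (hbc)
    ·
      by_cases sc : G.Adj v c
      ·
        by_cases sd : G.Adj v d
        · simp only [Xor', Xor, ne_eq, sa, sb, sc, sd, ha, hb, hc, hd, not_true, not_false_iff,
            true_and, and_true, false_and, and_false, or_false, false_or, true_or, or_true,
            not_not, iff_true, iff_false, not_or, not_and, eq_self_iff_true, not_false_eq_true,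
            not_true_eq_false] at hab hbc hcd kac kad kbd
          exact mkP4 hG (sc) (kac.symm) (hab) (sa) (sb) (fun h => hbc h.symm)
        · simp only [Xor', Xor, ne_eq, sa, sb, sc, sd, ha, hb, hc, hd, not_true, not_false_iff,
            true_and, and_true, false_and, and_false, or_false, false_or, true_or, or_true,
            not_not, iff_true, iff_false, not_or, not_and, eq_self_iff_true, not_false_eq_true,
            not_true_eq_false] at hab hbc hcd kac kad kbd
          exact mkP4 hG (sc) (kac.symm) (hab) (sa) (sb) (fun h => hbc h.symm)
      ·
        by_cases sd : G.Adj v d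
        · simp only [Xor', Xor, ne_eq, sa, sb, sc, sd, ha, hb, hc, hd, not_true, not_false_iff,
            true_and, and_true, false_and, and_false, or_false, false_or, true_or, or_true,
            not_not, iff_true, iff_false, not_or, not_and, eq_self_iff_true, not_false_eq_true,
            not_true_eq_false] at hab hbc hcd kac kad kbd
          exact mkP4 hG (sd) (kbd.symm) (hbc) (sb) (sc) (fun h => hcd h.symm)
        · simp only [Xor', Xor, ne_eq, sa, sb, sc, sd, ha, hb, hc, hd, not_true, not_false_iff,
            true_and, and_true, false_and, and_false, or_false, false_or, true_or, or_true,
            not_not, iff_true, iff_false, not_or, not_and, eq_self_iff_true, not_false_eq_true,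
            not_true_eq_false] at hab hbc hcd kac kad kbd
          exact mkP4 hG (hab) (hbc) (hcd) (kac) (kad) (kbd)



open SimpleGraph in
theorem stmt3 {V : Type*} (G : SimpleGraph V) (v : V)
    (hG : G.IndFree (pathGraph 4)) : (G.seidel v).IndFree (pathGraph 4) := by
  constructor
  intro f
  have inj : ∀ i j : Fin 4, f i = f j → i = j := fun i j h => f.injective h
  have adj : ∀ i j : Fin 4, (pathGraph 4).Adj i j →
      Xor' (G.Adj (f i) (f j))
        ((G.Adj v (f i) ∧ ¬ G.Adj v (f j) ∧ f j ≠ v) ∨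
         (G.Adj v (f j) ∧ ¬ G.Adj v (f i) ∧ f i ≠ v)) :=
    fun i j h => f.map_rel_iff.mpr h
  have nadj : ∀ i j : Fin 4, ¬ (pathGraph 4).Adj i j →
      ¬ Xor' (G.Adj (f i) (f j))
        ((G.Adj v (f i) ∧ ¬ G.Adj v (f j) ∧ f j ≠ v) ∨
         (G.Adj v (f j) ∧ ¬ G.Adj v (f i) ∧ f i ≠ v)) :=
    fun i j h h' => h (f.map_rel_iff.mp h')
  exact core hG
    (fun h => by cases inj 0 1 h) (fun h => by cases inj 0 2 h)
    (fun h => by cases inj 0 3 h) (fun h => by cases inj 1 2 h)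
    (fun h => by cases inj 1 3 h) (fun h => by cases inj 2 3 h)
    (adj 0 1 (by rw [pathGraph_adj]; decide))
    (adj 1 2 (by rw [pathGraph_adj]; decide))
    (adj 2 3 (by rw [pathGraph_adj]; decide))
    (nadj 0 2 (by rw [pathGraph_adj]; decide))
    (nadj 0 3 (by rw [pathGraph_adj]; decide))
    (nadj 1 3 (by rw [pathGraph_adj]; decide))
end

section
/- A graph G is (P5, House, Bull)-free if and only if for every vertex v of G, the Seidel complement G * v is (P5, House, Bull)-free. -/
namespace SimpleGraph

variable {V : Type*}

theorem seidel_adj' (G : SimpleGraph V) (v x y : V) :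
    (G.seidel v).Adj x y ↔ Xor' (G.Adj x y)
      ((G.Adj v x ∧ ¬ G.Adj v y ∧ y ≠ v) ∨ (G.Adj v y ∧ ¬ G.Adj v x ∧ x ≠ v)) := Iff.rfl

theorem adj_seidel_iff (G : SimpleGraph V) (v x y : V) :
    G.Adj x y ↔ Xor' ((G.seidel v).Adj x y)
      ((G.Adj v x ∧ ¬ G.Adj v y ∧ y ≠ v) ∨ (G.Adj v y ∧ ¬ G.Adj v x ∧ x ≠ v)) := by
  rw [seidel_adj']; unfold Xor' Xor; tauto

theorem seidel_adj_left (G : SimpleGraph V) (v x : V) :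
    (G.seidel v).Adj v x ↔ G.Adj v x := by
  rw [seidel_adj']; unfold Xor' Xor
  simp [G.irrefl]

theorem seidel_seidel (G : SimpleGraph V) (v : V) : (G.seidel v).seidel v = G := by
  ext x y
  rw [seidel_adj' (G.seidel v) v x y, seidel_adj_left, seidel_adj_left, seidel_adj']
  unfold Xor' Xor; tauto

/-- The three forbidden graphs. -/
def trio : Fin 3 → SimpleGraph (Fin 5)
  | 0 => pathGraph 5
  | 1 => house
  | 2 => bull

instance {n : ℕ} : DecidableRel (pathGraph n).Adj := fun _ _ =>
  decidable_of_iff _ pathGraph_adj.symm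

instance : DecidableRel bull.Adj := fun x y =>
  decidable_of_iff _ (fromRel_adj _ x y).symm

instance : DecidableRel house.Adj := fun x y =>
  inferInstanceAs (Decidable (x ≠ y ∧ ¬ (pathGraph 5).Adj x y))

instance seidelDecidable {W : Type*} [DecidableEq W] (G : SimpleGraph W) [DecidableRel G.Adj]
    (v : W) : DecidableRel (G.seidel v).Adj := fun _ _ =>
  inferInstanceAs (Decidable (Xor _ _))

instance trioDecidable : (t : Fin 3) → DecidableRel (trio t).Adj
  | 0 => inferInstanceAs (DecidableRel (pathGraph 5).Adj)
  | 1 => inferInstanceAs (DecidableRel house.Adj)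
  | 2 => inferInstanceAs (DecidableRel bull.Adj)

theorem phb_iff (G : SimpleGraph V) : G.PHBFree ↔ ∀ t : Fin 3, G.IndFree (trio t) := by
  constructor
  · rintro ⟨h0, h1, h2⟩ t
    match t with
    | 0 => exact h0
    | 1 => exact h1
    | 2 => exact h2
  · intro h; exact ⟨h 0, h 1, h 2⟩

/-- Adjacency for the auxiliary six-vertex graph. -/
def sixAdj (H : SimpleGraph (Fin 5)) (T : Fin 5 → Bool) :
    Option (Fin 5) → Option (Fin 5) → Prop
  | some i, some j => Xor' (H.Adj i j) (T i ≠ T j)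
  | some i, none => T i = true
  | none, some j => T j = true
  | none, none => False

/-- The auxiliary six-vertex graph: `H` with the cut at `T` flipped, plus an extra
vertex adjacent exactly to `T`. -/
def sixG (H : SimpleGraph (Fin 5)) (T : Fin 5 → Bool) : SimpleGraph (Option (Fin 5)) where
  Adj := sixAdj H T
  symm := by
    constructor
    rintro (_ | x) (_ | y) h
    · exact h
    · exact h
    · exact h
    · show Xor' (H.Adj y x) (T y ≠ T x)
      have h' : Xor' (H.Adj x y) (T x ≠ T y) := h
      rw [adj_comm, ne_comm]
      exact h'
  loopless := by
    constructor
    rintro (_ | x) h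
    · exact h
    · have h' : Xor' (H.Adj x x) (T x ≠ T x) := h
      unfold Xor' Xor at h'
      simp [H.irrefl] at h'

instance sixGDecidable (H : SimpleGraph (Fin 5)) [DecidableRel H.Adj] (T : Fin 5 → Bool) :
    DecidableRel (sixG H T).Adj := fun x y =>
  match x, y with
  | some _, some _ => inferInstanceAs (Decidable (Xor _ _))
  | some _, none => inferInstanceAs (Decidable (_ = true))
  | none, some _ => inferInstanceAs (Decidable (_ = true))
  | none, none => inferInstanceAs (Decidable False)

theorem factA (t : Fin 3) (k : Fin 5) :
    ∃ s : Fin 3, ∃ g : Fin 5 → Fin 5, Function.Injective g ∧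
      ∀ i j, ((trio t).seidel k).Adj (g i) (g j) ↔ (trio s).Adj i j := by
  fin_cases t <;> fin_cases k
  · exact ⟨2, ![1,3,4,0,2], by decide, by decide⟩
  · exact ⟨1, ![0,2,3,1,4], by decide, by decide⟩
  · exact ⟨0, ![0,3,2,1,4], by decide, by decide⟩
  · exact ⟨1, ![0,3,1,2,4], by decide, by decide⟩
  · exact ⟨2, ![1,3,0,2,4], by decide, by decide⟩
  · exact ⟨2, ![0,2,4,3,1], by decide, by decide⟩
  · exact ⟨0, ![0,2,3,1,4], by decide, by decide⟩
  · exact ⟨1, ![0,3,2,1,4], by decide, by decide⟩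
  · exact ⟨0, ![0,3,1,2,4], by decide, by decide⟩
  · exact ⟨2, ![2,4,0,3,1], by decide, by decide⟩
  · exact ⟨1, ![0,4,1,3,2], by decide, by decide⟩
  · exact ⟨1, ![1,3,0,4,2], by decide, by decide⟩
  · exact ⟨2, ![0,1,2,4,3], by decide, by decide⟩
  · exact ⟨0, ![2,1,4,0,3], by decide, by decide⟩
  · exact ⟨0, ![2,0,3,1,4], by decide, by decide⟩

theorem factB (t : Fin 3) (T : Fin 5 → Bool) :
    ∃ s : Fin 3, ∃ g : Fin 5 → Option (Fin 5), Function.Injective g ∧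
      ∀ i j, (sixG (trio t) T).Adj (g i) (g j) ↔ (trio s).Adj i j := by
  have hT : T = ![T 0, T 1, T 2, T 3, T 4] := by
    funext i; fin_cases i <;> rfl
  rw [hT]
  fin_cases t <;>
    rcases Bool.eq_false_or_eq_true (T 0) with h0 | h0 <;> rw [h0] <;>
    rcases Bool.eq_false_or_eq_true (T 1) with h1 | h1 <;> rw [h1] <;>
    rcases Bool.eq_false_or_eq_true (T 2) with h2 | h2 <;> rw [h2] <;>
    rcases Bool.eq_false_or_eq_true (T 3) with h3 | h3 <;> rw [h3] <;>
    rcases Bool.eq_false_or_eq_true (T 4) with h4 | h4 <;> rw [h4]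
  · exact ⟨0, ![some 0,some 1,some 2,some 3,some 4], by decide, by decide⟩
  · exact ⟨1, ![some 2,some 0,some 3,some 4,none], by decide, by decide⟩
  · exact ⟨2, ![some 1,none,some 2,some 3,some 4], by decide, by decide⟩
  · exact ⟨1, ![some 0,some 2,some 3,none,some 4], by decide, by decide⟩
  · exact ⟨0, ![some 1,some 0,some 2,some 4,some 3], by decide, by decide⟩
  · exact ⟨2, ![some 0,none,some 1,some 2,some 3], by decide, by decide⟩
  · exact ⟨1, ![some 0,some 4,some 1,some 2,none], by decide, by decide⟩
  · exact ⟨2, ![some 1,some 3,some 4,none,some 2], by decide, by decide⟩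
  · exact ⟨2, ![some 3,none,some 2,some 1,some 0], by decide, by decide⟩
  · exact ⟨0, ![some 0,some 4,some 2,some 3,some 1], by decide, by decide⟩
  · exact ⟨0, ![some 1,some 4,none,some 0,some 3], by decide, by decide⟩
  · exact ⟨1, ![some 0,some 2,some 3,none,some 4], by decide, by decide⟩
  · exact ⟨1, ![some 2,none,some 1,some 0,some 4], by decide, by decide⟩
  · exact ⟨0, ![some 1,some 3,none,some 0,some 4], by decide, by decide⟩
  · exact ⟨0, ![some 1,some 4,none,some 0,some 3], by decide, by decide⟩
  · exact ⟨2, ![some 0,some 2,some 3,none,some 1], by decide, by decide⟩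
  · exact ⟨1, ![some 2,some 4,some 1,some 0,none], by decide, by decide⟩
  · exact ⟨0, ![some 0,some 3,none,some 1,some 4], by decide, by decide⟩
  · exact ⟨0, ![some 0,some 4,none,some 1,some 3], by decide, by decide⟩
  · exact ⟨2, ![some 1,some 2,none,some 3,some 0], by decide, by decide⟩
  · exact ⟨2, ![some 4,none,some 3,some 2,some 1], by decide, by decide⟩
  · exact ⟨0, ![some 0,some 3,none,some 1,some 4], by decide, by decide⟩
  · exact ⟨0, ![some 0,some 4,some 2,some 3,some 1], by decide, by decide⟩
  · exact ⟨2, ![some 1,some 3,some 4,none,some 2], by decide, by decide⟩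
  · exact ⟨1, ![some 0,none,some 1,some 2,some 4], by decide, by decide⟩
  · exact ⟨2, ![some 2,some 3,none,some 4,some 1], by decide, by decide⟩
  · exact ⟨1, ![some 0,none,some 1,some 2,some 4], by decide, by decide⟩
  · exact ⟨0, ![some 1,some 0,some 2,some 4,some 3], by decide, by decide⟩
  · exact ⟨2, ![some 1,some 3,some 0,some 2,none], by decide, by decide⟩
  · exact ⟨2, ![some 1,some 3,some 0,some 2,none], by decide, by decide⟩
  · exact ⟨2, ![some 2,some 4,some 1,some 3,none], by decide, by decide⟩
  · exact ⟨0, ![some 0,some 1,some 2,some 3,some 4], by decide, by decide⟩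
  · exact ⟨1, ![some 0,some 1,some 2,some 3,some 4], by decide, by decide⟩
  · exact ⟨2, ![some 3,none,some 1,some 4,some 2], by decide, by decide⟩
  · exact ⟨2, ![some 2,none,some 0,some 3,some 1], by decide, by decide⟩
  · exact ⟨2, ![some 2,none,some 0,some 3,some 1], by decide, by decide⟩
  · exact ⟨1, ![some 1,some 0,some 2,some 4,some 3], by decide, by decide⟩
  · exact ⟨0, ![some 0,none,some 1,some 2,some 4], by decide, by decide⟩
  · exact ⟨2, ![some 1,some 4,none,some 2,some 3], by decide, by decide⟩
  · exact ⟨0, ![some 0,none,some 1,some 2,some 4], by decide, by decide⟩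
  · exact ⟨2, ![some 2,none,some 4,some 1,some 3], by decide, by decide⟩
  · exact ⟨1, ![some 0,some 4,some 2,some 3,some 1], by decide, by decide⟩
  · exact ⟨1, ![some 0,some 3,none,some 1,some 4], by decide, by decide⟩
  · exact ⟨2, ![some 1,some 2,some 3,some 4,none], by decide, by decide⟩
  · exact ⟨2, ![some 0,some 3,none,some 1,some 2], by decide, by decide⟩
  · exact ⟨0, ![some 2,some 4,some 1,some 0,none], by decide, by decide⟩
  · exact ⟨1, ![some 0,some 3,none,some 1,some 4], by decide, by decide⟩
  · exact ⟨0, ![some 2,some 4,some 1,some 0,none], by decide, by decide⟩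
  · exact ⟨2, ![some 1,none,some 3,some 0,some 2], by decide, by decide⟩
  · exact ⟨0, ![some 0,some 4,some 3,none,some 2], by decide, by decide⟩
  · exact ⟨1, ![some 1,some 3,none,some 0,some 4], by decide, by decide⟩
  · exact ⟨0, ![some 2,none,some 1,some 0,some 4], by decide, by decide⟩
  · exact ⟨0, ![some 0,some 2,some 3,none,some 4], by decide, by decide⟩
  · exact ⟨1, ![some 1,some 4,none,some 0,some 3], by decide, by decide⟩
  · exact ⟨0, ![some 2,some 0,some 3,some 4,none], by decide, by decide⟩
  · exact ⟨2, ![some 0,some 1,some 2,some 3,none], by decide, by decide⟩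
  · exact ⟨2, ![some 2,none,some 4,some 1,some 3], by decide, by decide⟩
  · exact ⟨0, ![some 0,some 4,some 1,some 2,none], by decide, by decide⟩
  · exact ⟨2, ![some 2,some 3,some 1,none,some 0], by decide, by decide⟩
  · exact ⟨0, ![some 0,some 4,some 1,some 2,none], by decide, by decide⟩
  · exact ⟨0, ![some 0,some 2,some 3,none,some 4], by decide, by decide⟩
  · exact ⟨2, ![some 3,some 4,some 2,none,some 1], by decide, by decide⟩
  · exact ⟨0, ![some 2,some 0,some 3,some 4,none], by decide, by decide⟩
  · exact ⟨1, ![some 0,some 1,some 2,some 3,some 4], by decide, by decide⟩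
  · exact ⟨2, ![some 0,some 1,some 2,some 3,some 4], by decide, by decide⟩
  · exact ⟨1, ![some 2,some 3,some 1,some 4,none], by decide, by decide⟩
  · exact ⟨1, ![some 2,some 4,some 0,some 3,none], by decide, by decide⟩
  · exact ⟨2, ![some 0,some 1,none,some 4,some 3], by decide, by decide⟩
  · exact ⟨1, ![some 3,some 4,some 0,some 2,none], by decide, by decide⟩
  · exact ⟨2, ![some 0,some 3,some 4,some 1,some 2], by decide, by decide⟩
  · exact ⟨2, ![some 1,some 4,some 3,some 0,some 2], by decide, by decide⟩
  · exact ⟨2, ![some 0,some 1,none,some 4,some 3], by decide, by decide⟩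
  · exact ⟨2, ![some 3,none,some 0,some 1,some 4], by decide, by decide⟩
  · exact ⟨1, ![some 3,some 2,some 1,none,some 4], by decide, by decide⟩
  · exact ⟨1, ![some 2,some 4,some 0,some 3,none], by decide, by decide⟩
  · exact ⟨2, ![some 2,some 4,some 0,some 3,some 1], by decide, by decide⟩
  · exact ⟨0, ![some 0,none,some 4,some 2,some 1], by decide, by decide⟩
  · exact ⟨0, ![some 2,some 1,some 4,some 0,none], by decide, by decide⟩
  · exact ⟨0, ![some 0,none,some 4,some 2,some 1], by decide, by decide⟩
  · exact ⟨0, ![some 2,some 1,some 4,some 0,none], by decide, by decide⟩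
  · exact ⟨2, ![some 4,none,some 1,some 0,some 3], by decide, by decide⟩
  · exact ⟨1, ![some 2,some 3,some 1,some 4,none], by decide, by decide⟩
  · exact ⟨1, ![some 3,none,some 0,some 2,some 4], by decide, by decide⟩
  · exact ⟨2, ![some 2,some 3,some 1,some 4,some 0], by decide, by decide⟩
  · exact ⟨0, ![some 0,some 2,some 3,none,some 1], by decide, by decide⟩
  · exact ⟨0, ![some 0,some 2,some 3,none,some 1], by decide, by decide⟩
  · exact ⟨0, ![some 2,some 0,some 3,some 1,none], by decide, by decide⟩
  · exact ⟨0, ![some 2,some 0,some 3,some 1,none], by decide, by decide⟩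
  · exact ⟨0, ![some 0,some 1,some 3,none,some 2], by decide, by decide⟩
  · exact ⟨0, ![some 0,some 1,some 3,none,some 2], by decide, by decide⟩
  · exact ⟨0, ![some 1,some 0,some 3,some 2,none], by decide, by decide⟩
  · exact ⟨0, ![some 0,some 1,some 4,some 2,none], by decide, by decide⟩
  · exact ⟨1, ![some 2,none,some 0,some 3,some 4], by decide, by decide⟩
  · exact ⟨2, ![some 1,some 3,some 4,some 0,none], by decide, by decide⟩
  · exact ⟨2, ![some 0,some 4,some 3,some 1,none], by decide, by decide⟩
  · exact ⟨2, ![some 0,some 1,some 2,some 3,some 4], by decide, by decide⟩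

theorem seidel_phb (G : SimpleGraph V) (hG : G.PHBFree) (v : V) : (G.seidel v).PHBFree := by
  classical
  rw [phb_iff] at hG ⊢
  intro t
  refine ⟨fun f => ?_⟩
  suffices h : ∃ s : Fin 3, Nonempty (trio s ↪g G) by
    obtain ⟨s, ⟨e⟩⟩ := h; exact (hG s).false e
  by_cases hv : ∃ k : Fin 5, f k = v
  · obtain ⟨k, hk⟩ := hv
    have hx : ∀ i, G.Adj v (f i) ↔ (trio t).Adj k i := by
      intro i
      have h1 : (G.seidel v).Adj (f k) (f i) ↔ (trio t).Adj k i := f.map_rel_iff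
      rw [hk, seidel_adj_left] at h1
      exact h1
    have hne : ∀ i : Fin 5, f i = v ↔ i = k := by
      intro i
      exact ⟨fun h => f.injective (h.trans hk.symm), fun h => by rw [h]; exact hk⟩
    have e1 : (trio t).seidel k ↪g G := by
      refine ⟨⟨fun i => f i, fun a b h => f.injective h⟩, ?_⟩
      intro a b
      show G.Adj (f a) (f b) ↔ ((trio t).seidel k).Adj a b
      rw [adj_seidel_iff G v (f a) (f b), seidel_adj' (trio t) k a b, f.map_rel_iff]
      simp only [ne_eq, hx a, hx b, hne a, hne b]
    obtain ⟨s, g, hg1, hg2⟩ := factA t k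
    exact ⟨s, ⟨(RelEmbedding.mk ⟨g, hg1⟩ (fun {a b} => hg2 a b)).trans e1⟩⟩
  · push_neg at hv
    set T : Fin 5 → Bool := fun i => decide (G.Adj v (f i)) with hTdef
    have hT : ∀ i, T i = true ↔ G.Adj v (f i) := by
      intro i; rw [hTdef]; exact decide_eq_true_iff
    have e1 : sixG (trio t) T ↪g G := by
      refine ⟨⟨fun o => o.elim v f, ?_⟩, ?_⟩
      · rintro (_ | a) (_ | b) h
        · rfl
        · exact absurd h.symm (hv b)
        · exact absurd h (hv a)
        · exact congrArg some (f.injective h)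
      · rintro (_ | a) (_ | b)
        · exact iff_of_false (G.irrefl (v := v)) (fun h => h)
        · exact (hT b).symm
        · show G.Adj (f a) v ↔ (T a = true)
          rw [G.adj_comm]
          exact (hT a).symm
        · show G.Adj (f a) (f b) ↔ Xor' ((trio t).Adj a b) (T a ≠ T b)
          rw [adj_seidel_iff G v (f a) (f b), f.map_rel_iff]
          have h1 : ((G.Adj v (f a) ∧ ¬ G.Adj v (f b) ∧ f b ≠ v) ∨
              (G.Adj v (f b) ∧ ¬ G.Adj v (f a) ∧ f a ≠ v)) ↔ (T a ≠ T b) := by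
            rw [← hT a, ← hT b]
            simp only [hv a, hv b, ne_eq, not_false_iff, and_true]
            rcases Bool.eq_false_or_eq_true (T a) with ha | ha <;>
              rcases Bool.eq_false_or_eq_true (T b) with hb | hb <;>
              rw [ha, hb] <;> simp
          rw [h1]
    obtain ⟨s, g, hg1, hg2⟩ := factB t T
    exact ⟨s, ⟨(RelEmbedding.mk ⟨g, hg1⟩ (fun {a b} => hg2 a b)).trans e1⟩⟩

end SimpleGraph

open SimpleGraph in
theorem stmt4 {V : Type*} (G : SimpleGraph V) :
    G.PHBFree ↔ ∀ v : V, (G.seidel v).PHBFree := by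
  constructor
  · intro h v
    exact seidel_phb G h v
  · intro h
    by_cases hV : Nonempty V
    · obtain ⟨v⟩ := hV
      have h2 := seidel_phb (G.seidel v) (h v) v
      rwa [seidel_seidel] at h2
    · exact ⟨⟨fun f => hV ⟨f 0⟩⟩, ⟨fun f => hV ⟨f 0⟩⟩, ⟨fun f => hV ⟨f 0⟩⟩⟩
end

section
/- Every prime (P5, complement-of-P5)-free graph is either isomorphic to C5 or contains no induced C5. -/
namespace C5Aux
open SimpleGraph

variable {V : Type*} {G : SimpleGraph V}

/-- Arithmetic/cycle facts on `Fin 5` by `decide`. -/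
lemma cyc_succ : ∀ i : Fin 5, (cycleGraph 5).Adj i (i+1) := by decide
lemma cyc_iff : ∀ i j : Fin 5, (cycleGraph 5).Adj i j ↔ (i ≠ j ∧ (j = i+1 ∨ i = j+1)) := by decide
lemma cyc_shift : ∀ i j k : Fin 5, (cycleGraph 5).Adj (i+k) (j+k) ↔ (cycleGraph 5).Adj i j := by decide

def IsC5 (G : SimpleGraph V) (c : Fin 5 → V) : Prop :=
  Function.Injective c ∧ ∀ i j, G.Adj (c i) (c j) ↔ (cycleGraph 5).Adj i j

lemma IsC5.shift {c : Fin 5 → V} (h : IsC5 G c) (k : Fin 5) : IsC5 G (fun i => c (i + k)) := by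
  refine ⟨fun i j e => ?_, fun i j => (h.2 _ _).trans (cyc_shift i j k)⟩
  exact add_right_cancel (h.1 e)

section Witness

variable {c : Fin 5 → V} {v : V}

lemma no_singleton0 (h1 : IsEmpty (pathGraph 5 ↪g G)) (hc : IsC5 G c)
    (hv : ∀ i, v ≠ c i) (hp : ∀ j, G.Adj v (c j) ↔ j = 0) : False := by
  have hcc := hc.2
  have hcv : ∀ j, G.Adj (c j) v ↔ j = 0 :=
    fun j => ⟨fun h => (hp j).mp h.symm, fun h => ((hp j).mpr h).symm⟩
  have hne : ∀ i j : Fin 5, i ≠ j → c i ≠ c j := fun i j h e => h (hc.1 e)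
  refine h1.elim ⟨⟨![v, c 0, c 1, c 2, c 3], ?_⟩, @fun i j => ?_⟩
  · intro i j h
    fin_cases i <;> fin_cases j <;>
      simp only [Matrix.cons_val_zero, Matrix.cons_val_one, Matrix.head_cons,
        Matrix.cons_val_two, Matrix.tail_cons, Matrix.cons_val_three, Matrix.cons_val_four] at h <;>
      first
      | rfl
      | exact absurd h (hv _)
      | exact absurd h (Ne.symm (hv _))
      | exact absurd h (hne _ _ (by decide))
  · show G.Adj _ _ ↔ (pathGraph 5).Adj i j
    fin_cases i <;> fin_cases j <;> rw [pathGraph_adj] <;>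
      simp only [Matrix.cons_val_zero, Matrix.cons_val_one, Matrix.head_cons,
        Matrix.cons_val_two, Matrix.tail_cons, Matrix.cons_val_three, Matrix.cons_val_four] <;>
      first
      | exact iff_of_false (G.loopless.irrefl _) (by decide)
      | exact (hcc _ _).trans (by decide)
      | exact (hp _).trans (by decide)
      | exact (hcv _).trans (by decide)

lemma no_pair0 (h1 : IsEmpty (pathGraph 5 ↪g G)) (hc : IsC5 G c)
    (hv : ∀ i, v ≠ c i) (hp : ∀ j, G.Adj v (c j) ↔ (j = 0 ∨ j = 1)) : False := by
  have hcc := hc.2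
  have hcv : ∀ j, G.Adj (c j) v ↔ (j = 0 ∨ j = 1) :=
    fun j => ⟨fun h => (hp j).mp h.symm, fun h => ((hp j).mpr h).symm⟩
  have hne : ∀ i j : Fin 5, i ≠ j → c i ≠ c j := fun i j h e => h (hc.1 e)
  refine h1.elim ⟨⟨![v, c 1, c 2, c 3, c 4], ?_⟩, @fun i j => ?_⟩
  · intro i j h
    fin_cases i <;> fin_cases j <;>
      simp only [Matrix.cons_val_zero, Matrix.cons_val_one, Matrix.head_cons,
        Matrix.cons_val_two, Matrix.tail_cons, Matrix.cons_val_three, Matrix.cons_val_four] at h <;>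
      first
      | rfl
      | exact absurd h (hv _)
      | exact absurd h (Ne.symm (hv _))
      | exact absurd h (hne _ _ (by decide))
  · show G.Adj _ _ ↔ (pathGraph 5).Adj i j
    fin_cases i <;> fin_cases j <;> rw [pathGraph_adj] <;>
      simp only [Matrix.cons_val_zero, Matrix.cons_val_one, Matrix.head_cons,
        Matrix.cons_val_two, Matrix.tail_cons, Matrix.cons_val_three, Matrix.cons_val_four] <;>
      first
      | exact iff_of_false (G.loopless.irrefl _) (by decide)
      | exact (hcc _ _).trans (by decide)
      | exact (hp _).trans (by decide)
      | exact (hcv _).trans (by decide)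

set_option maxHeartbeats 1000000 in
lemma no_triple0 (h2 : IsEmpty ((pathGraph 5)ᶜ ↪g G)) (hc : IsC5 G c)
    (hv : ∀ i, v ≠ c i) (hp : ∀ j, G.Adj v (c j) ↔ (j = 0 ∨ j = 1 ∨ j = 3)) : False := by
  have hcc := hc.2
  have hcv : ∀ j, G.Adj (c j) v ↔ (j = 0 ∨ j = 1 ∨ j = 3) :=
    fun j => ⟨fun h => (hp j).mp h.symm, fun h => ((hp j).mpr h).symm⟩
  have hne : ∀ i j : Fin 5, i ≠ j → c i ≠ c j := fun i j h e => h (hc.1 e)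
  refine h2.elim ⟨⟨![v, c 2, c 0, c 3, c 1], ?_⟩, @fun i j => ?_⟩
  · intro i j h
    fin_cases i <;> fin_cases j <;>
      simp only [Matrix.cons_val_zero, Matrix.cons_val_one, Matrix.head_cons,
        Matrix.cons_val_two, Matrix.tail_cons, Matrix.cons_val_three, Matrix.cons_val_four] at h <;>
      first
      | rfl
      | exact absurd h (hv _)
      | exact absurd h (Ne.symm (hv _))
      | exact absurd h (hne _ _ (by decide))
  · show G.Adj _ _ ↔ (pathGraph 5)ᶜ.Adj i j
    fin_cases i <;> fin_cases j <;> rw [compl_adj, pathGraph_adj] <;>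
      simp only [Matrix.cons_val_zero, Matrix.cons_val_one, Matrix.head_cons,
        Matrix.cons_val_two, Matrix.tail_cons, Matrix.cons_val_three, Matrix.cons_val_four] <;>
      first
      | exact iff_of_false (G.loopless.irrefl _) (by decide)
      | exact (hcc _ _).trans (by decide)
      | exact (hp _).trans (by decide)
      | exact (hcv _).trans (by decide)

set_option maxHeartbeats 1000000 in
lemma no_co0 (h2 : IsEmpty ((pathGraph 5)ᶜ ↪g G)) (hc : IsC5 G c)
    (hv : ∀ i, v ≠ c i) (hp : ∀ j, G.Adj v (c j) ↔ j ≠ 4) : False := by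
  have hcc := hc.2
  have hcv : ∀ j, G.Adj (c j) v ↔ j ≠ 4 :=
    fun j => ⟨fun h => (hp j).mp h.symm, fun h => ((hp j).mpr h).symm⟩
  have hne : ∀ i j : Fin 5, i ≠ j → c i ≠ c j := fun i j h e => h (hc.1 e)
  refine h2.elim ⟨⟨![v, c 4, c 1, c 3, c 0], ?_⟩, @fun i j => ?_⟩
  · intro i j h
    fin_cases i <;> fin_cases j <;>
      simp only [Matrix.cons_val_zero, Matrix.cons_val_one, Matrix.head_cons,
        Matrix.cons_val_two, Matrix.tail_cons, Matrix.cons_val_three, Matrix.cons_val_four] at h <;>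
      first
      | rfl
      | exact absurd h (hv _)
      | exact absurd h (Ne.symm (hv _))
      | exact absurd h (hne _ _ (by decide))
  · show G.Adj _ _ ↔ (pathGraph 5)ᶜ.Adj i j
    fin_cases i <;> fin_cases j <;> rw [compl_adj, pathGraph_adj] <;>
      simp only [Matrix.cons_val_zero, Matrix.cons_val_one, Matrix.head_cons,
        Matrix.cons_val_two, Matrix.tail_cons, Matrix.cons_val_three, Matrix.cons_val_four] <;>
      first
      | exact iff_of_false (G.loopless.irrefl _) (by decide)
      | exact (hcc _ _).trans (by decide)
      | exact (hp _).trans (by decide)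
      | exact (hcv _).trans (by decide)

lemma no_singleton (h1 : IsEmpty (pathGraph 5 ↪g G)) (hc : IsC5 G c)
    (hv : ∀ i, v ≠ c i) (k : Fin 5) (hp : ∀ j, G.Adj v (c j) ↔ j = k) : False :=
  no_singleton0 h1 (hc.shift k) (fun i => hv _)
    (fun j => (hp _).trans ((by decide : ∀ j k : Fin 5, (j + k = k ↔ j = 0)) j k))

lemma no_pair (h1 : IsEmpty (pathGraph 5 ↪g G)) (hc : IsC5 G c)
    (hv : ∀ i, v ≠ c i) (k : Fin 5) (hp : ∀ j, G.Adj v (c j) ↔ (j = k ∨ j = k+1)) : False :=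
  no_pair0 h1 (hc.shift k) (fun i => hv _)
    (fun j => (hp _).trans
      ((by decide : ∀ j k : Fin 5, ((j + k = k ∨ j + k = k+1) ↔ (j = 0 ∨ j = 1))) j k))

lemma no_triple (h2 : IsEmpty ((pathGraph 5)ᶜ ↪g G)) (hc : IsC5 G c)
    (hv : ∀ i, v ≠ c i) (k : Fin 5)
    (hp : ∀ j, G.Adj v (c j) ↔ (j = k ∨ j = k+1 ∨ j = k+3)) : False :=
  no_triple0 h2 (hc.shift k) (fun i => hv _)
    (fun j => (hp _).trans
      ((by decide : ∀ j k : Fin 5,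
        ((j + k = k ∨ j + k = k+1 ∨ j + k = k+3) ↔ (j = 0 ∨ j = 1 ∨ j = 3))) j k))

lemma no_co (h2 : IsEmpty ((pathGraph 5)ᶜ ↪g G)) (hc : IsC5 G c)
    (hv : ∀ i, v ≠ c i) (k : Fin 5) (hp : ∀ j, G.Adj v (c j) ↔ j ≠ k) : False :=
  no_co0 h2 (hc.shift (k+1)) (fun i => hv _)
    (fun j => (hp _).trans
      ((by decide : ∀ j k : Fin 5, ((j + (k+1) ≠ k) ↔ j ≠ 4)) j k))

end Witness

set_option maxRecDepth 10000 in
lemma boolCase : ∀ s : Fin 5 → Bool,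
    (∀ i, s i = false) ∨ (∀ i, s i = true) ∨
    (∃ i, ∀ j, s j = true ↔ (j = i+1 ∨ j = i+4)) ∨
    (∃ i, ∀ j, s j = true ↔ (j = i ∨ j = i+1 ∨ j = i+4)) ∨
    (∃ k, ∀ j, s j = true ↔ j = k) ∨
    (∃ k, ∀ j, s j = true ↔ (j = k ∨ j = k+1)) ∨
    (∃ k, ∀ j, s j = true ↔ (j = k ∨ j = k+1 ∨ j = k+3)) ∨
    (∃ k, ∀ j, s j = true ↔ j ≠ k) := by decide

lemma classify (h1 : IsEmpty (pathGraph 5 ↪g G)) (h2 : IsEmpty ((pathGraph 5)ᶜ ↪g G))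
    {c : Fin 5 → V} (hc : IsC5 G c) {v : V} (hv : ∀ i, v ≠ c i) :
    (∀ i, ¬ G.Adj v (c i)) ∨ (∀ i, G.Adj v (c i)) ∨
    (∃ i, ∀ j, G.Adj v (c j) ↔ (j = i+1 ∨ j = i+4)) ∨
    (∃ i, ∀ j, G.Adj v (c j) ↔ (j = i ∨ j = i+1 ∨ j = i+4)) := by
  classical
  set s : Fin 5 → Bool := fun i => decide (G.Adj v (c i)) with hs
  have hsi : ∀ i, s i = true ↔ G.Adj v (c i) := fun i => by simp [hs]
  rcases boolCase s with h|h|⟨i,h⟩|⟨i,h⟩|⟨k,h⟩|⟨k,h⟩|⟨k,h⟩|⟨k,h⟩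
  · refine Or.inl (fun i hA => ?_)
    have hb := (hsi i).mpr hA
    rw [h i] at hb
    cases hb
  · exact Or.inr (Or.inl (fun i => (hsi i).mp (h i)))
  · exact Or.inr (Or.inr (Or.inl ⟨i, fun j => (hsi j).symm.trans (h j)⟩))
  · exact Or.inr (Or.inr (Or.inr ⟨i, fun j => (hsi j).symm.trans (h j)⟩))
  · exact absurd (fun j => (hsi j).symm.trans (h j)) (fun hp => no_singleton h1 hc hv k hp)
  · exact absurd (fun j => (hsi j).symm.trans (h j)) (fun hp => no_pair h1 hc hv k hp)
  · exact absurd (fun j => (hsi j).symm.trans (h j)) (fun hp => no_triple h2 hc hv k hp)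
  · exact absurd (fun j => (hsi j).symm.trans (h j)) (fun hp => no_co h2 hc hv k hp)


def Wk (G : SimpleGraph V) (B : Fin 5 → Set V) : Prop :=
  (∀ i, (B i).Nonempty) ∧ (∀ i j, i ≠ j → Disjoint (B i) (B j)) ∧
  (∀ i, ∀ x ∈ B i, ∀ y ∈ B (i+1), G.Adj x y) ∧
  (∀ i j, i ≠ j → j ≠ i+1 → i ≠ j+1 → ∀ x ∈ B i, ∀ y ∈ B j, ¬ G.Adj x y)

lemma transversal_isC5 {B : Fin 5 → Set V} (hB : Wk G B) {x : Fin 5 → V}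
    (hx : ∀ i, x i ∈ B i) : IsC5 G x := by
  obtain ⟨hne, hdis, hadj, hnadj⟩ := hB
  have hinj : Function.Injective x := by
    intro i j e
    by_contra hij
    exact Set.disjoint_left.mp (hdis i j hij) (hx i) (e ▸ hx j)
  refine ⟨hinj, fun i j => ?_⟩
  rw [cyc_iff]
  constructor
  · intro hA
    have hij : i ≠ j := fun e => G.loopless.irrefl _ (e ▸ hA)
    refine ⟨hij, ?_⟩
    by_contra hor
    push_neg at hor
    exact hnadj i j hij hor.1 hor.2 (x i) (hx i) (x j) (hx j) hA
  · rintro ⟨hij, h|h⟩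
    · rw [h]; exact hadj i _ (hx i) _ (hx (i+1))
    · rw [h]; exact (hadj j _ (hx j) _ (hx (j+1))).symm

lemma upd_mem {B : Fin 5 → Set V} {x : Fin 5 → V} (hx : ∀ i, x i ∈ B i) {j : Fin 5} {y : V}
    (hy : y ∈ B j) : ∀ i, Function.update x j y i ∈ B i := by
  intro i
  rcases eq_or_ne i j with rfl|h
  · simpa using hy
  · rw [Function.update_of_ne h]; exact hx i

lemma extend {B : Fin 5 → Set V} (hB : Wk G B) {v : V} (hv : v ∉ ⋃ j, B j) (i : Fin 5)
    (e1 : ∀ y ∈ B (i+1), G.Adj v y) (e2 : ∀ y ∈ B (i+4), G.Adj v y)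
    (e3 : ∀ y ∈ B (i+2), ¬ G.Adj v y) (e4 : ∀ y ∈ B (i+3), ¬ G.Adj v y) :
    Wk G (Function.update B i (insert v (B i))) := by
  obtain ⟨hne, hdis, hadj, hnadj⟩ := hB
  have hvB : ∀ j, v ∉ B j := fun j hj => hv (Set.mem_iUnion.mpr ⟨j, hj⟩)
  set B' := Function.update B i (insert v (B i)) with hB'
  have hmem : ∀ j z, z ∈ B' j ↔ (z ∈ B j ∨ (j = i ∧ z = v)) := by
    intro j z
    rcases eq_or_ne j i with rfl|h
    · simp [hB', Function.update_self]; tauto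
    · simp [hB', Function.update_of_ne h, h]
  -- case analysis helper on classes
  have hcase : ∀ j : Fin 5, j ≠ i → j = i+1 ∨ j = i+2 ∨ j = i+3 ∨ j = i+4 :=
    (by decide : ∀ i j : Fin 5, j ≠ i → j = i+1 ∨ j = i+2 ∨ j = i+3 ∨ j = i+4) i
  have hAdjTo : ∀ j, ∀ z ∈ B j, (j = i+1 ∨ j = i+4) → G.Adj v z := by
    rintro j z hz (rfl|rfl)
    · exact e1 z hz
    · exact e2 z hz
  have hNAdjTo : ∀ j, ∀ z ∈ B j, (j = i+2 ∨ j = i+3) → ¬ G.Adj v z := by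
    rintro j z hz (rfl|rfl)
    · exact e3 z hz
    · exact e4 z hz
  refine ⟨fun j => ?_, fun j k hjk => ?_, fun j x hxj y hyk => ?_, fun j k hjk h1 h2 x hxj y hyk => ?_⟩
  · rcases eq_or_ne j i with rfl|h
    · exact ⟨v, (hmem j v).mpr (Or.inr ⟨rfl, rfl⟩)⟩
    · exact (hne j).imp (fun z hz => (hmem j z).mpr (Or.inl hz))
  · rw [Set.disjoint_left]
    intro z hzj hzk
    rcases (hmem j z).mp hzj with hz|⟨hji, hzv⟩
    · rcases (hmem k z).mp hzk with hz'|⟨hki, hzv⟩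
      · exact Set.disjoint_left.mp (hdis j k hjk) hz hz'
      · exact hvB j (hzv ▸ hz)
    · rcases (hmem k z).mp hzk with hz'|⟨hki, hzv'⟩
      · exact hvB k (hzv ▸ hz')
      · exact hjk (hji.trans hki.symm)
  · -- edges between consecutive classes
    rcases (hmem j x).mp hxj with hxB|⟨hji, hxv⟩
    · rcases (hmem (j+1) y).mp hyk with hyB|⟨hj1, hyv⟩
      · exact hadj j x hxB y hyB
      · subst hyv
        have hj : j = i + 4 := (by decide : ∀ i j : Fin 5, j + 1 = i → j = i + 4) i j hj1
        exact (e2 x (hj ▸ hxB)).symm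
    · subst hxv; subst hji
      rcases (hmem (j+1) y).mp hyk with hyB|⟨hj1, hyv⟩
      · exact e1 y hyB
      · exact absurd hj1 ((by decide : ∀ i : Fin 5, ¬ (i + 1 = i)) j)
  · rcases (hmem j x).mp hxj with hxB|⟨hji, hxv⟩
    · rcases (hmem k y).mp hyk with hyB|⟨hki, hyv⟩
      · exact hnadj j k hjk h1 h2 x hxB y hyB
      · subst hyv; subst hki
        have hj : j = k+2 ∨ j = k+3 :=
          (by decide : ∀ i j : Fin 5, j ≠ i → i ≠ j + 1 → j ≠ i + 1 → (j = i+2 ∨ j = i+3))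
            k j hjk h1 h2
        exact fun hA => hNAdjTo j x hxB hj hA.symm
    · subst hxv; subst hji
      rcases (hmem k y).mp hyk with hyB|⟨hki, hyv⟩
      · have hk : k = j+2 ∨ k = j+3 :=
          (by decide : ∀ i k : Fin 5, i ≠ k → k ≠ i + 1 → i ≠ k + 1 → (k = i+2 ∨ k = i+3))
            j k hjk h1 h2
        exact hNAdjTo k y hyB hk
      · subst hyv; exact absurd hki (Ne.symm hjk)



lemma max_module (h1 : IsEmpty (pathGraph 5 ↪g G)) (h2 : IsEmpty ((pathGraph 5)ᶜ ↪g G))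
    {B : Fin 5 → Set V} (hB : Wk G B)
    (hmax : ∀ i v, v ∉ (⋃ j, B j) → ¬ Wk G (Function.update B i (insert v (B i))))
    {v : V} (hv : v ∉ ⋃ j, B j) :
    (∀ y ∈ ⋃ j, B j, G.Adj v y) ∨ (∀ y ∈ ⋃ j, B j, ¬ G.Adj v y) := by
  classical
  choose x hx using hB.1
  have hC := transversal_isC5 hB hx
  have hvnx : ∀ {x' : Fin 5 → V}, (∀ i, x' i ∈ B i) → ∀ i, v ≠ x' i :=
    fun hx' i e => hv (Set.mem_iUnion.mpr ⟨i, e ▸ hx' i⟩)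
  rcases classify h1 h2 hC (hvnx hx) with hZ|hF|⟨i,hP⟩|⟨i,hT⟩
  · right
    intro y hy hA
    obtain ⟨j, hyj⟩ := Set.mem_iUnion.mp hy
    refine no_singleton h1 (transversal_isC5 hB (upd_mem hx hyj)) (hvnx (upd_mem hx hyj)) j
      (fun t => ?_)
    rcases eq_or_ne t j with rfl|ht
    · rw [Function.update_self]; exact iff_of_true hA rfl
    · rw [Function.update_of_ne ht]; exact iff_of_false (hZ t) ht
  · left
    intro y hy
    by_contra hA
    obtain ⟨j, hyj⟩ := Set.mem_iUnion.mp hy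
    refine no_co h2 (transversal_isC5 hB (upd_mem hx hyj)) (hvnx (upd_mem hx hyj)) j
      (fun t => ?_)
    rcases eq_or_ne t j with rfl|ht
    · rw [Function.update_self]; exact iff_of_false hA (by simp)
    · rw [Function.update_of_ne ht]; exact iff_of_true (hF t) ht
  · exfalso
    have c1 : ∀ y ∈ B (i+1), G.Adj v y := by
      intro y hyj; by_contra hA
      refine no_singleton h1 (transversal_isC5 hB (upd_mem hx hyj)) (hvnx (upd_mem hx hyj)) (i+4)
        (fun t => ?_)
      rcases eq_or_ne t (i+1) with rfl|ht
      · rw [Function.update_self]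
        exact iff_of_false hA ((by decide : ∀ i : Fin 5, ¬(i+1 = i+4)) i)
      · rw [Function.update_of_ne ht]
        exact (hP t).trans
          ((by decide : ∀ t i : Fin 5, t ≠ i+1 → ((t = i+1 ∨ t = i+4) ↔ t = i+4)) t i ht)
    have c2 : ∀ y ∈ B (i+4), G.Adj v y := by
      intro y hyj; by_contra hA
      refine no_singleton h1 (transversal_isC5 hB (upd_mem hx hyj)) (hvnx (upd_mem hx hyj)) (i+1)
        (fun t => ?_)
      rcases eq_or_ne t (i+4) with rfl|ht
      · rw [Function.update_self]
        exact iff_of_false hA ((by decide : ∀ i : Fin 5, ¬(i+4 = i+1)) i)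
      · rw [Function.update_of_ne ht]
        exact (hP t).trans
          ((by decide : ∀ t i : Fin 5, t ≠ i+4 → ((t = i+1 ∨ t = i+4) ↔ t = i+1)) t i ht)
    have c3 : ∀ y ∈ B (i+2), ¬ G.Adj v y := by
      intro y hyj hA
      refine no_triple h2 (transversal_isC5 hB (upd_mem hx hyj)) (hvnx (upd_mem hx hyj)) (i+1)
        (fun t => ?_)
      rcases eq_or_ne t (i+2) with rfl|ht
      · rw [Function.update_self]
        exact iff_of_true hA
          ((by decide : ∀ i : Fin 5, (i+2 = i+1 ∨ i+2 = i+1+1 ∨ i+2 = i+1+3)) i)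
      · rw [Function.update_of_ne ht]
        exact (hP t).trans ((by decide : ∀ t i : Fin 5, t ≠ i+2 →
          ((t = i+1 ∨ t = i+4) ↔ (t = i+1 ∨ t = i+1+1 ∨ t = i+1+3))) t i ht)
    have c4 : ∀ y ∈ B (i+3), ¬ G.Adj v y := by
      intro y hyj hA
      refine no_triple h2 (transversal_isC5 hB (upd_mem hx hyj)) (hvnx (upd_mem hx hyj)) (i+3)
        (fun t => ?_)
      rcases eq_or_ne t (i+3) with rfl|ht
      · rw [Function.update_self]
        exact iff_of_true hA (Or.inl rfl)
      · rw [Function.update_of_ne ht]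
        exact (hP t).trans ((by decide : ∀ t i : Fin 5, t ≠ i+3 →
          ((t = i+1 ∨ t = i+4) ↔ (t = i+3 ∨ t = i+3+1 ∨ t = i+3+3))) t i ht)
    exact absurd (extend hB hv i c1 c2 c3 c4) (hmax i v hv)
  · exfalso
    have c1 : ∀ y ∈ B (i+1), G.Adj v y := by
      intro y hyj; by_contra hA
      refine no_pair h1 (transversal_isC5 hB (upd_mem hx hyj)) (hvnx (upd_mem hx hyj)) (i+4)
        (fun t => ?_)
      rcases eq_or_ne t (i+1) with rfl|ht
      · rw [Function.update_self]
        exact iff_of_false hA ((by decide : ∀ i : Fin 5, ¬(i+1 = i+4 ∨ i+1 = i+4+1)) i)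
      · rw [Function.update_of_ne ht]
        exact (hT t).trans ((by decide : ∀ t i : Fin 5, t ≠ i+1 →
          ((t = i ∨ t = i+1 ∨ t = i+4) ↔ (t = i+4 ∨ t = i+4+1))) t i ht)
    have c2 : ∀ y ∈ B (i+4), G.Adj v y := by
      intro y hyj; by_contra hA
      refine no_pair h1 (transversal_isC5 hB (upd_mem hx hyj)) (hvnx (upd_mem hx hyj)) i
        (fun t => ?_)
      rcases eq_or_ne t (i+4) with rfl|ht
      · rw [Function.update_self]
        exact iff_of_false hA ((by decide : ∀ i : Fin 5, ¬(i+4 = i ∨ i+4 = i+1)) i)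
      · rw [Function.update_of_ne ht]
        exact (hT t).trans ((by decide : ∀ t i : Fin 5, t ≠ i+4 →
          ((t = i ∨ t = i+1 ∨ t = i+4) ↔ (t = i ∨ t = i+1))) t i ht)
    have c3 : ∀ y ∈ B (i+2), ¬ G.Adj v y := by
      intro y hyj hA
      refine no_co h2 (transversal_isC5 hB (upd_mem hx hyj)) (hvnx (upd_mem hx hyj)) (i+3)
        (fun t => ?_)
      rcases eq_or_ne t (i+2) with rfl|ht
      · rw [Function.update_self]
        exact iff_of_true hA ((by decide : ∀ i : Fin 5, i+2 ≠ i+3) i)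
      · rw [Function.update_of_ne ht]
        exact (hT t).trans ((by decide : ∀ t i : Fin 5, t ≠ i+2 →
          ((t = i ∨ t = i+1 ∨ t = i+4) ↔ t ≠ i+3)) t i ht)
    have c4 : ∀ y ∈ B (i+3), ¬ G.Adj v y := by
      intro y hyj hA
      refine no_co h2 (transversal_isC5 hB (upd_mem hx hyj)) (hvnx (upd_mem hx hyj)) (i+2)
        (fun t => ?_)
      rcases eq_or_ne t (i+3) with rfl|ht
      · rw [Function.update_self]
        exact iff_of_true hA ((by decide : ∀ i : Fin 5, i+3 ≠ i+2) i)
      · rw [Function.update_of_ne ht]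
        exact (hT t).trans ((by decide : ∀ t i : Fin 5, t ≠ i+3 →
          ((t = i ∨ t = i+1 ∨ t = i+4) ↔ t ≠ i+2)) t i ht)
    exact absurd (extend hB hv i c1 c2 c3 c4) (hmax i v hv)

lemma exists_max [Fintype V] (hex : ∃ B, Wk G B) :
    ∃ B, Wk G B ∧ ∀ i v, v ∉ (⋃ j, B j) → ¬ Wk G (Function.update B i (insert v (B i))) := by
  classical
  obtain ⟨B, hBs, hBmax⟩ := Set.Finite.exists_maximalFor
    (fun B : Fin 5 → Set V => (⋃ j, B j).ncard) {B | Wk G B} (Set.toFinite _) hex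
  refine ⟨B, hBs, fun i v hv hW => ?_⟩
  set B' := Function.update B i (insert v (B i)) with hB'
  have hsub : (⋃ j, B j) ⊆ ⋃ j, B' j := by
    intro z hz
    obtain ⟨j, hj⟩ := Set.mem_iUnion.mp hz
    refine Set.mem_iUnion.mpr ⟨j, ?_⟩
    rcases eq_or_ne j i with rfl|h
    · rw [hB', Function.update_self]; exact Or.inr hj
    · rwa [hB', Function.update_of_ne h]
  have hmem : v ∈ ⋃ j, B' j :=
    Set.mem_iUnion.mpr ⟨i, by rw [hB', Function.update_self]; exact Or.inl rfl⟩
  have hlt : (⋃ j, B j).ncard < (⋃ j, B' j).ncard :=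
    Set.ncard_lt_ncard ((Set.ssubset_iff_of_subset hsub).mpr ⟨v, hmem, hv⟩) (Set.toFinite _)
  exact absurd (hBmax hW hlt.le) (not_le.mpr hlt)

end C5Aux


open SimpleGraph in
theorem stmt6 {V : Type*} [Fintype V] (G : SimpleGraph V) (hp : G.IsPrime)
    (h1 : G.IndFree (pathGraph 5)) (h2 : G.IndFree (pathGraph 5)ᶜ) :
    Nonempty (G ≃g cycleGraph 5) ∨ G.IndFree (cycleGraph 5) := by
  classical
  rw [or_iff_not_imp_right]
  intro hfree
  obtain ⟨f⟩ := not_isEmpty_iff.mp hfree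
  have h1' : IsEmpty (pathGraph 5 ↪g G) := h1
  have h2' : IsEmpty ((pathGraph 5)ᶜ ↪g G) := h2
  have hB0 : C5Aux.Wk G (fun i => {f i}) := by
    refine ⟨fun i => ⟨f i, rfl⟩, fun i j hij => ?_, fun i x hx y hy => ?_,
      fun i j hij ha hb x hx y hy => ?_⟩
    · simp only [Set.disjoint_singleton_left, Set.mem_singleton_iff]
      exact fun e => hij (f.injective e)
    · rw [Set.mem_singleton_iff] at hx hy
      subst hx; subst hy
      exact f.map_rel_iff.mpr (C5Aux.cyc_succ i)
    · rw [Set.mem_singleton_iff] at hx hy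
      subst hx; subst hy
      intro hA
      exact (by decide : ∀ i j : Fin 5, i ≠ j → j ≠ i+1 → i ≠ j+1 → ¬ (cycleGraph 5).Adj i j)
        i j hij ha hb (f.map_rel_iff.mp hA)
  obtain ⟨B, hB, hmax⟩ := C5Aux.exists_max ⟨_, hB0⟩
  have hmod : G.IsModule (⋃ j, B j) :=
    fun z hz => C5Aux.max_module h1' h2' hB hmax hz
  rcases hp.2 _ hmod with he|⟨w,hw⟩|huniv
  · exfalso
    obtain ⟨z, hz⟩ := hB.1 0
    have : z ∈ ⋃ j, B j := Set.mem_iUnion.mpr ⟨0, hz⟩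
    rw [he] at this
    exact this
  · exfalso
    obtain ⟨z0, hz0⟩ := hB.1 0
    obtain ⟨z1, hz1⟩ := hB.1 1
    have m0 : z0 ∈ ⋃ j, B j := Set.mem_iUnion.mpr ⟨0, hz0⟩
    have m1 : z1 ∈ ⋃ j, B j := Set.mem_iUnion.mpr ⟨1, hz1⟩
    rw [hw, Set.mem_singleton_iff] at m0 m1
    exact Set.disjoint_left.mp (hB.2.1 0 1 (by decide)) hz0 ((m0.trans m1.symm) ▸ hz1)
  · have hcov : ∀ z : V, ∃ j, z ∈ B j := fun z =>
      Set.mem_iUnion.mp (huniv ▸ Set.mem_univ z)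
    obtain ⟨hne, hdis, hadj, hnadj⟩ := hB
    have hmodi : ∀ i, G.IsModule (B i) := by
      intro i z hz
      obtain ⟨j, hj⟩ := hcov z
      have hij : j ≠ i := fun e => hz (e ▸ hj)
      by_cases h4 : i = j + 1
      · left; intro y hy; exact hadj j z hj y (h4 ▸ hy)
      by_cases h5 : j = i + 1
      · left; intro y hy; exact (hadj i y hy z (h5 ▸ hj)).symm
      · right; intro y hy; exact hnadj j i hij h4 h5 z hj y hy
    have hsing : ∀ i, ∃ b, B i = {b} := by
      intro i
      rcases hp.2 _ (hmodi i) with he|hs|hu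
      · obtain ⟨z, hz⟩ := hne i
        exact absurd (he ▸ hz) (Set.notMem_empty z)
      · exact hs
      · exfalso
        obtain ⟨z, hz⟩ := hne (i+1)
        exact Set.disjoint_left.mp (hdis i (i+1) ((by decide : ∀ i : Fin 5, i ≠ i+1) i))
          (hu ▸ Set.mem_univ z) hz
    choose b hb using hsing
    have hbB : ∀ i, b i ∈ B i := fun i => (hb i) ▸ rfl
    have hIsC5 := C5Aux.transversal_isC5 (G := G) ⟨hne, hdis, hadj, hnadj⟩ hbB
    have hbij : Function.Bijective b := by
      refine ⟨hIsC5.1, fun z => ?_⟩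
      obtain ⟨j, hj⟩ := hcov z
      rw [hb j, Set.mem_singleton_iff] at hj
      exact ⟨j, hj.symm⟩
    exact ⟨(SimpleGraph.Iso.symm ⟨Equiv.ofBijective b hbij, fun {a b'} => hIsC5.2 a b'⟩)⟩
end

section
/- A prime graph G on n vertices is bipartite and P5-free if and only if n is even and V(G) can be partitioned into two stable sets B = {b_1,...,b_{n/2}} and W = {w_1,...,w_{n/2}} such that for each i, the neighborhood of b_i is exactly {w_1, ..., w_{n/2 - i + 1}}. -/
open SimpleGraph

lemma mk_p5 {V : Type*} (G : SimpleGraph V) (a b c d e : V)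
    (hab : G.Adj a b) (hbc : G.Adj b c) (hcd : G.Adj c d) (hde : G.Adj d e)
    (nac : ¬ G.Adj a c) (nad : ¬ G.Adj a d) (nae : ¬ G.Adj a e)
    (nbd : ¬ G.Adj b d) (nbe : ¬ G.Adj b e) (nce : ¬ G.Adj c e) :
    ¬ G.IndFree (pathGraph 5) := by
  intro hF
  have hne : ∀ x y : V, G.Adj x y → x ≠ y := fun x y h hxy => G.irrefl (hxy ▸ h)
  have hac : a ≠ c := fun h => nad (h ▸ hcd)
  have had : a ≠ d := fun h => nae (h ▸ hde)
  have hae : a ≠ e := fun h => nad (h ▸ hde.symm)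
  have hbd : b ≠ d := fun h => nbe (h ▸ hde)
  have hbe : b ≠ e := fun h => nbd (h ▸ hde.symm)
  have hce : c ≠ e := fun h => nbe (h ▸ hbc)
  let f : Fin 5 → V := ![a, b, c, d, e]
  have hinj : Function.Injective f := by
    intro i j hij
    fin_cases i <;> fin_cases j <;>
      first
      | rfl
      | (exfalso; revert hij; simp only [f, Matrix.cons_val_zero, Matrix.cons_val_one,
          Matrix.head_cons, Matrix.cons_val_two, Matrix.tail_cons, Matrix.cons_val_three,
          Matrix.cons_val_four]
         first
         | exact hne _ _ hab | exact fun h => hne _ _ hab h.symm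
         | exact hne _ _ hbc | exact fun h => hne _ _ hbc h.symm
         | exact hne _ _ hcd | exact fun h => hne _ _ hcd h.symm
         | exact hne _ _ hde | exact fun h => hne _ _ hde h.symm
         | exact hac | exact fun h => hac h.symm
         | exact had | exact fun h => had h.symm
         | exact hae | exact fun h => hae h.symm
         | exact hbd | exact fun h => hbd h.symm
         | exact hbe | exact fun h => hbe h.symm
         | exact hce | exact fun h => hce h.symm)
  have emb : pathGraph 5 ↪g G := by
    refine ⟨⟨f, hinj⟩, ?_⟩
    intro i j
    fin_cases i <;> fin_cases j <;>
      simp only [Function.Embedding.coeFn_mk, f, Matrix.cons_val_zero, Matrix.cons_val_one,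
        Matrix.head_cons, Matrix.cons_val_two, Matrix.tail_cons, Matrix.cons_val_three,
        Matrix.cons_val_four, pathGraph_adj] <;>
      constructor <;> intro h <;>
      first
      | omega
      | exact Or.inl trivial
      | exact Or.inr trivial
      | exact absurd h (G.irrefl)
      | exact absurd h nac | exact absurd h nad | exact absurd h nae
      | exact absurd h nbd | exact absurd h nbe | exact absurd h nce
      | exact absurd h.symm nac | exact absurd h.symm nad | exact absurd h.symm nae
      | exact absurd h.symm nbd | exact absurd h.symm nbe | exact absurd h.symm nce
      | exact hab | exact hab.symm | exact hbc | exact hbc.symm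
      | exact hcd | exact hcd.symm | exact hde | exact hde.symm
  exact hF.false emb


lemma prime_pre {V : Type*} [Fintype V] (G : SimpleGraph V) (hp : G.IsPrime) :
    G.Preconnected := by
  intro u v
  obtain ⟨h3, hmod⟩ := hp
  have keyM : ∀ u : V, ({y | G.Reachable u y} : Set V) = Set.univ ∨
      ({y | G.Reachable u y} : Set V) = {u} := by
    intro u
    have hM : G.IsModule {y | G.Reachable u y} := by
      intro x hx
      right
      intro y hy hadj
      exact hx (hy.trans hadj.symm.reachable)
    rcases hmod _ hM with h | ⟨z, hz⟩ | h
    · exact absurd (h ▸ (Set.mem_setOf.mpr (Reachable.refl u : G.Reachable u u))) (Set.notMem_empty u)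
    · right
      have hu : u ∈ ({z} : Set V) := hz ▸ Set.mem_setOf.mpr (Reachable.refl u : G.Reachable u u)
      rw [hz, Set.mem_singleton_iff.mp hu]
    · left; exact h
  rcases keyM u with h | h
  · exact Set.eq_univ_iff_forall.mp h v
  · -- u is isolated: every vertex reachable from u equals u
    exfalso
    have hiso : ∀ y, G.Adj u y → False := by
      intro y hy
      have : y ∈ ({y | G.Reachable u y} : Set V) := hy.reachable
      rw [h] at this
      exact G.irrefl (this ▸ hy)
    have hM' : G.IsModule ({u}ᶜ : Set V) := by
      intro x hx
      right
      intro y hy hadj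
      have hxu : x = u := by simpa using hx
      exact hiso y (hxu ▸ hadj)
    rcases hmod _ hM' with h' | ⟨z, hz⟩ | h'
    · -- complement empty: card ≤ 1
      have : ∀ y : V, y = u := by
        intro y
        by_contra hy
        have := (by simpa using hy : y ∈ ({u}ᶜ : Set V))
        rw [h'] at this
        exact this
      have : Fintype.card V ≤ 1 := Fintype.card_le_one_iff.mpr (fun a b => (this a).trans (this b).symm)
      omega
    · -- complement singleton: card ≤ 2
      have hsub : (Set.univ : Set V) ⊆ {u, z} := by
        intro y _
        by_cases hy : y = u
        · exact Or.inl hy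
        · have : y ∈ ({u}ᶜ : Set V) := by simpa using hy
          rw [hz] at this
          exact Or.inr this
      have h2 : Fintype.card V ≤ 2 := by
        have := Set.ncard_le_ncard hsub (Set.toFinite _)
        rw [Set.ncard_univ] at this
        calc Fintype.card V = Nat.card V := (Nat.card_eq_fintype_card).symm
          _ ≤ ({u, z} : Set V).ncard := this
          _ ≤ 2 := (Set.ncard_insert_le _ _).trans (by simp)
      omega
    · exact absurd (h' ▸ Set.mem_univ u) (by simp)


lemma fin2_trans : ∀ a b c : Fin 2, a ≠ b → b ≠ c → a = c := by decide

lemma common_nbr {V : Type*} (G : SimpleGraph V) (hF : G.IndFree (pathGraph 5))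
    (hpre : G.Preconnected) (c : G.Coloring (Fin 2)) {u v : V}
    (hne : u ≠ v) (hcol : c u = c v) : ∃ z, G.Adj u z ∧ G.Adj z v := by
  have hreach := hpre u v
  have hd1 : 0 < G.dist u v := hreach.pos_dist_of_ne hne
  have hnadj : ¬ G.Adj u v := fun h => (c.valid h) hcol
  have hd2 : G.dist u v ≠ 1 := fun h => hnadj (dist_eq_one_iff_adj.mp h)
  obtain ⟨p, hlen⟩ := hreach.exists_walk_length_eq_dist
  -- rule out dist ≥ 4
  have hd4 : G.dist u v < 4 := by
    by_contra hge
    push_neg at hge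
    rcases p with _ | ⟨h1, p⟩
    · exact absurd rfl hne
    rename_i a
    rcases p with _ | ⟨h2, p⟩
    · simp at hlen; omega
    rename_i b
    rcases p with _ | ⟨h3, p⟩
    · simp at hlen; omega
    rename_i c'
    rcases p with _ | ⟨h4, q⟩
    · simp at hlen; omega
    rename_i e
    simp only [Walk.length_cons] at hlen
    have nub : ¬ G.Adj u b := fun h => by
      have := G.dist_le (Walk.cons h (Walk.cons h3 (Walk.cons h4 q)))
      simp only [Walk.length_cons] at this; omega
    have nuc : ¬ G.Adj u c' := fun h => by
      have := G.dist_le (Walk.cons h (Walk.cons h4 q))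
      simp only [Walk.length_cons] at this; omega
    have nue : ¬ G.Adj u e := fun h => by
      have := G.dist_le (Walk.cons h q)
      simp only [Walk.length_cons] at this; omega
    have nac : ¬ G.Adj a c' := fun h => by
      have := G.dist_le (Walk.cons h1 (Walk.cons h (Walk.cons h4 q)))
      simp only [Walk.length_cons] at this; omega
    have nae : ¬ G.Adj a e := fun h => by
      have := G.dist_le (Walk.cons h1 (Walk.cons h q))
      simp only [Walk.length_cons] at this; omega
    have nbe : ¬ G.Adj b e := fun h => by
      have := G.dist_le (Walk.cons h1 (Walk.cons h2 (Walk.cons h q)))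
      simp only [Walk.length_cons] at this; omega
    exact mk_p5 G u a b c' e h1 h2 h3 h4 nub nuc nue nac nae nbe hF
  -- rule out dist = 3
  have hd3 : G.dist u v ≠ 3 := by
    intro h3
    rw [h3] at hlen
    rcases p with _ | ⟨h1, p⟩
    · simp at hlen
    rename_i a
    rcases p with _ | ⟨h2, p⟩
    · simp at hlen
    rename_i b
    rcases p with _ | ⟨h3', q⟩
    · simp at hlen
    rename_i c'
    simp only [Walk.length_cons] at hlen
    have hq0 : q.length = 0 := by omega
    have hbv := q.eq_of_length_eq_zero hq0
    have e1 : c u ≠ c a := c.valid h1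
    have e2 : c a ≠ c b := c.valid h2
    have e3 : c b ≠ c v := by rw [← hbv]; exact c.valid h3'
    have : c u = c b := fin2_trans _ _ _ e1 e2
    exact e3 (this ▸ hcol)
  have hd : G.dist u v = 2 := by omega
  rw [hd] at hlen
  rcases p with _ | ⟨h1, p⟩
  · simp at hlen
  rename_i a
  rcases p with _ | ⟨h2, q⟩
  · simp at hlen
  rename_i b
  simp only [Walk.length_cons] at hlen
  have hq0 : q.length = 0 := by omega
  have hbv := q.eq_of_length_eq_zero hq0
  exact ⟨a, h1, hbv ▸ h2⟩

lemma chain_lemma {V : Type*} (G : SimpleGraph V) (hF : G.IndFree (pathGraph 5))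
    (hpre : G.Preconnected) (c : G.Coloring (Fin 2)) {u v : V}
    (hcol : c u = c v) :
    (∀ x, G.Adj u x → G.Adj v x) ∨ (∀ x, G.Adj v x → G.Adj u x) := by
  by_contra hcon
  push_neg at hcon
  obtain ⟨⟨x, hux, hvx⟩, ⟨y, hvy, huy⟩⟩ := hcon
  have hne : u ≠ v := fun h => hvx (h ▸ hux)
  obtain ⟨z, huz, hzv⟩ := common_nbr G hF hpre c hne hcol
  -- path x - u - z - v - y
  have cxu : c x ≠ c u := fun h => c.valid hux h.symm
  have cxz : c x = c z := fin2_trans _ _ _ cxu (c.valid huz)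
  have czy : c z = c y := fin2_trans _ _ _ (c.valid hzv) (c.valid hvy)
  have cxy : c x = c y := cxz.trans czy
  exact mk_p5 G x u z v y hux.symm huz hzv hvy
    (fun h => c.valid h cxz) (fun h => hvx h.symm) (fun h => c.valid h cxy)
    (fun h => c.valid h hcol) huy (fun h => c.valid h czy) hF


lemma card_le_two_of_pair {V : Type*} [Fintype V] {u z : V}
    (h : (Set.univ : Set V) ⊆ {u, z}) : Fintype.card V ≤ 2 := by
  have := Set.ncard_le_ncard h (Set.toFinite _)
  rw [Set.ncard_univ] at this
  calc Fintype.card V = Nat.card V := (Nat.card_eq_fintype_card).symm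
    _ ≤ ({u, z} : Set V).ncard := this
    _ ≤ 2 := (Set.ncard_insert_le _ _).trans (by simp)


set_option maxHeartbeats 1600000 in
theorem forward {V : Type*} [Fintype V] (G : SimpleGraph V) (hp : G.IsPrime)
    (c : G.Coloring (Fin 2)) (hF : G.IndFree (pathGraph 5)) :
    ∃ k : ℕ, Fintype.card V = 2 * k ∧
      ∃ b w : Fin k → V,
        Function.Injective b ∧ Function.Injective w ∧
        (∀ i j, b i ≠ w j) ∧
        (∀ x : V, (∃ i, x = b i) ∨ (∃ i, x = w i)) ∧
        (∀ i j, ¬ G.Adj (b i) (b j)) ∧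
        (∀ i j, ¬ G.Adj (w i) (w j)) ∧
        (∀ i j, G.Adj (b i) (w j) ↔ i.val + j.val < k) := by
  classical
  have hpre := prime_pre G hp
  let degf : V → ℕ := fun v => (G.neighborFinset v).card
  obtain ⟨h3, hmod⟩ := hp
  set B : Finset V := Finset.univ.filter (fun v => c v = 0) with hBdef
  set Ws : Finset V := Finset.univ.filter (fun v => c v = 1) with hWdef
  have fin2 : ∀ x : Fin 2, x = 0 ∨ x = 1 := by decide
  have hmemB : ∀ v, v ∈ B ↔ c v = 0 := by intro v; simp [hBdef]
  have hmemW : ∀ v, v ∈ Ws ↔ c v = 1 := by intro v; simp [hWdef]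
  have hcover : ∀ v, v ∈ B ∨ v ∈ Ws := by
    intro v; rcases fin2 (c v) with h | h
    · exact Or.inl ((hmemB v).mpr h)
    · exact Or.inr ((hmemW v).mpr h)
  have hsamecol : ∀ u v : V, ((u ∈ B ∧ v ∈ B) ∨ (u ∈ Ws ∧ v ∈ Ws)) → c u = c v := by
    intro u v h
    rcases h with ⟨h1, h2⟩ | ⟨h1, h2⟩
    · rw [(hmemB u).mp h1, (hmemB v).mp h2]
    · rw [(hmemW u).mp h1, (hmemW v).mp h2]
  -- neighborhoods
  have hNW : ∀ u ∈ B, G.neighborFinset u ⊆ Ws := by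
    intro u hu x hx
    rw [mem_neighborFinset] at hx
    have := c.valid hx
    rw [(hmemB u).mp hu] at this
    rcases fin2 (c x) with h | h
    · exact absurd h.symm this
    · exact (hmemW x).mpr h
  have hNB : ∀ u ∈ Ws, G.neighborFinset u ⊆ B := by
    intro u hu x hx
    rw [mem_neighborFinset] at hx
    have := c.valid hx
    rw [(hmemW u).mp hu] at this
    rcases fin2 (c x) with h | h
    · exact (hmemB x).mpr h
    · exact absurd h.symm this
  -- chain
  have hchain : ∀ u v : V, c u = c v →
      G.neighborFinset u ⊆ G.neighborFinset v ∨ G.neighborFinset v ⊆ G.neighborFinset u := by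
    intro u v hc
    rcases chain_lemma G hF hpre c hc with h | h
    · left; intro x hx
      exact (mem_neighborFinset _ _ _).mpr (h x ((mem_neighborFinset _ _ _).mp hx))
    · right; intro x hx
      exact (mem_neighborFinset _ _ _).mpr (h x ((mem_neighborFinset _ _ _).mp hx))
  -- no twins
  have hnotwin : ∀ u v : V, u ≠ v → G.neighborFinset u ≠ G.neighborFinset v := by
    intro u v hne hN
    have hAdjIff : ∀ t, G.Adj u t ↔ G.Adj v t := by
      intro t
      rw [← mem_neighborFinset, ← mem_neighborFinset, hN]
    have hM : G.IsModule {u, v} := by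
      intro x hx
      by_cases hadj : G.Adj x u
      · left
        intro y hy
        rcases hy with h | h
        · exact h ▸ hadj
        · have : G.Adj u x := hadj.symm
          rw [hAdjIff x] at this
          exact (Set.mem_singleton_iff.mp h) ▸ this.symm
      · right
        intro y hy hc2
        rcases hy with h | h
        · exact hadj (h ▸ hc2)
        · have : G.Adj v x := ((Set.mem_singleton_iff.mp h) ▸ hc2).symm
          rw [← hAdjIff x] at this
          exact hadj this.symm
    rcases hmod _ hM with h | ⟨z, hz⟩ | h
    · have : u ∈ ({u, v} : Set V) := Or.inl rfl
      rw [h] at this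
      exact this
    · have hu : u ∈ ({z} : Set V) := hz ▸ (Or.inl rfl : u ∈ ({u, v} : Set V))
      have hv : v ∈ ({z} : Set V) := hz ▸ (Or.inr rfl : v ∈ ({u, v} : Set V))
      exact hne (hu.trans hv.symm)
    · have : Fintype.card V ≤ 2 := card_le_two_of_pair h.symm.subset
      omega
  -- positive degree
  have hdegpos : ∀ u : V, 0 < degf u := by
    intro u
    obtain ⟨v, hv⟩ := Fintype.exists_ne_of_one_lt_card (by omega) u
    obtain ⟨p⟩ := hpre u v
    cases p with
    | nil => exact absurd rfl hv.symm  -- u = v contradiction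
    | cons h q =>
      exact Finset.card_pos.mpr ⟨_, (mem_neighborFinset _ _ _).mpr h⟩
  -- degree injective on same colour
  have hdeginj : ∀ u v : V, c u = c v → degf u = degf v → u = v := by
    intro u v hc hd
    by_contra hne
    have hNne := hnotwin u v hne
    rcases hchain u v hc with h | h
    · exact hNne (Finset.eq_of_subset_of_card_le h hd.ge)
    · exact hNne (Finset.eq_of_subset_of_card_le h hd.le).symm
  -- degrees land in Icc
  have hdegB : ∀ u ∈ B, degf u ∈ Finset.Icc 1 Ws.card := by
    intro u hu
    rw [Finset.mem_Icc]
    constructor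
    · exact hdegpos u
    · exact Finset.card_le_card (hNW u hu)
  have hdegWs : ∀ u ∈ Ws, degf u ∈ Finset.Icc 1 B.card := by
    intro u hu
    rw [Finset.mem_Icc]
    refine ⟨hdegpos u, ?_⟩
    exact Finset.card_le_card (hNB u hu)
  have hinjB : Set.InjOn degf (B : Set V) := by
    intro u hu v hv h
    exact hdeginj u v (hsamecol u v (Or.inl ⟨hu, hv⟩)) h
  have hinjW : Set.InjOn degf (Ws : Set V) := by
    intro u hu v hv h
    exact hdeginj u v (hsamecol u v (Or.inr ⟨hu, hv⟩)) h
  have hcardBW : B.card = Ws.card := by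
    have h1 : B.card ≤ Ws.card := by
      have := Finset.card_le_card_of_injOn degf hdegB hinjB
      simpa using this
    have h2 : Ws.card ≤ B.card := by
      have := Finset.card_le_card_of_injOn degf hdegWs hinjW
      simpa using this
    omega
  set k := B.card with hkdef
  have hWk : Ws.card = k := hcardBW.symm
  -- degree images are full
  have himB : B.image degf = Finset.Icc 1 k := by
    apply Finset.eq_of_subset_of_card_le
    · intro t ht
      obtain ⟨u, hu, rfl⟩ := Finset.mem_image.mp ht
      rw [← hWk]; exact hdegB u hu
    · rw [Nat.card_Icc, Finset.card_image_of_injOn hinjB]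
      omega
  have himW : Ws.image degf = Finset.Icc 1 k := by
    apply Finset.eq_of_subset_of_card_le
    · intro t ht
      obtain ⟨u, hu, rfl⟩ := Finset.mem_image.mp ht
      rw [hkdef]; exact hdegWs u hu
    · rw [Nat.card_Icc, Finset.card_image_of_injOn hinjW]
      omega
  -- counting filters on Ws
  have hcountlt : ∀ t, (Ws.filter (fun w' => degf w' < t)).card = min (t - 1) k := by
    intro t
    have h1 : (Ws.filter (fun w' => degf w' < t)).image degf
        = (Ws.image degf).filter (fun s => s < t) := by
      ext s
      simp only [Finset.mem_image, Finset.mem_filter]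
      constructor
      · rintro ⟨x, ⟨hx, hlt⟩, rfl⟩; exact ⟨⟨x, hx, rfl⟩, hlt⟩
      · rintro ⟨⟨x, hx, rfl⟩, hlt⟩; exact ⟨x, ⟨hx, hlt⟩, rfl⟩
    have h2 := Finset.card_image_of_injOn
      (hinjW.mono (Finset.filter_subset (fun w' => degf w' < t) Ws))
    rw [h1, himW] at h2
    rw [← h2]
    have : (Finset.Icc 1 k).filter (fun s => s < t) = Finset.Ico 1 (min t (k + 1)) := by
      ext s
      simp only [Finset.mem_filter, Finset.mem_Icc, Finset.mem_Ico]
      omega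
    rw [this, Nat.card_Ico]
    omega
  have hcountgt : ∀ t, (Ws.filter (fun w' => t < degf w')).card = k - t := by
    intro t
    have h1 : (Ws.filter (fun w' => t < degf w')).image degf
        = (Ws.image degf).filter (fun s => t < s) := by
      ext s
      simp only [Finset.mem_image, Finset.mem_filter]
      constructor
      · rintro ⟨x, ⟨hx, hlt⟩, rfl⟩; exact ⟨⟨x, hx, rfl⟩, hlt⟩
      · rintro ⟨⟨x, hx, rfl⟩, hlt⟩; exact ⟨x, ⟨hx, hlt⟩, rfl⟩
    have h2 := Finset.card_image_of_injOn
      (hinjW.mono (Finset.filter_subset (fun w' => t < degf w') Ws))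
    rw [h1, himW] at h2
    rw [← h2]
    have : (Finset.Icc 1 k).filter (fun s => t < s) = Finset.Ioc t k ∪ Finset.Ioc k k := by
      ext s
      simp only [Finset.mem_filter, Finset.mem_Icc, Finset.mem_union, Finset.mem_Ioc]
      omega
    rw [this]
    simp only [Finset.Ioc_self, Finset.union_empty, Nat.card_Ioc]
  -- the key adjacency criterion
  have hkey : ∀ u ∈ B, ∀ w ∈ Ws, (G.Adj u w ↔ k < degf u + degf w) := by
    intro u hu w hw
    have hdu1 : 1 ≤ degf u := hdegpos u
    have hduk : degf u ≤ k := by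
      have := hdegB u hu; rw [Finset.mem_Icc] at this; omega
    have hdw1 : 1 ≤ degf w := hdegpos w
    have hdwk : degf w ≤ k := by
      have := hdegWs w hw; rw [Finset.mem_Icc] at this
      omega
    constructor
    · intro hadj
      have hsd : (Ws \ G.neighborFinset u).card = k - degf u := by
        rw [Finset.card_sdiff_of_subset (hNW u hu), hWk]
      have hsub : Ws \ G.neighborFinset u ⊆ Ws.filter (fun w' => degf w' < degf w) := by
        intro w' hw'
        rw [Finset.mem_sdiff] at hw'
        obtain ⟨hw'W, hw'N⟩ := hw'
        rw [Finset.mem_filter]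
        refine ⟨hw'W, ?_⟩
        have hcww : c w' = c w := hsamecol w' w (Or.inr ⟨hw'W, hw⟩)
        have huNw : u ∈ G.neighborFinset w := (mem_neighborFinset _ _ _).mpr hadj.symm
        have huNw' : u ∉ G.neighborFinset w' := by
          intro hmem
          exact hw'N ((mem_neighborFinset _ _ _).mpr ((mem_neighborFinset _ _ _).mp hmem).symm)
        have hss : G.neighborFinset w' ⊂ G.neighborFinset w := by
          rcases hchain w' w hcww with h | h
          · exact Finset.ssubset_iff_subset_ne.mpr ⟨h, fun hh => huNw' (hh ▸ huNw)⟩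
          · exact absurd (h huNw) huNw'
        exact Finset.card_lt_card hss
      have := Finset.card_le_card hsub
      rw [hsd, hcountlt (degf w)] at this
      omega
    · intro hlt
      by_contra hadj
      have hsub : G.neighborFinset u ⊆ Ws.filter (fun w' => degf w < degf w') := by
        intro w' hw'
        have hw'W : w' ∈ Ws := hNW u hu hw'
        rw [Finset.mem_filter]
        refine ⟨hw'W, ?_⟩
        have hcww : c w = c w' := hsamecol w w' (Or.inr ⟨hw, hw'W⟩)
        have huNw' : u ∈ G.neighborFinset w' :=
          (mem_neighborFinset _ _ _).mpr ((mem_neighborFinset _ _ _).mp hw').symm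
        have huNw : u ∉ G.neighborFinset w := by
          intro hmem
          exact hadj ((mem_neighborFinset _ _ _).mp hmem).symm
        have hss : G.neighborFinset w ⊂ G.neighborFinset w' := by
          rcases hchain w w' hcww with h | h
          · exact Finset.ssubset_iff_subset_ne.mpr ⟨h, fun hh => huNw (hh ▸ huNw')⟩
          · exact absurd (h huNw') huNw
        exact Finset.card_lt_card hss
      have := Finset.card_le_card hsub
      rw [hcountgt (degf w)] at this
      have hdu : degf u = (G.neighborFinset u).card := rfl
      omega
  -- choose the enumerations
  have hbex : ∀ i : Fin k, ∃ u, u ∈ B ∧ degf u = k - i.val := by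
    intro i
    have : k - i.val ∈ Finset.Icc 1 k := by
      rw [Finset.mem_Icc]
      have := i.isLt
      omega
    rw [← himB] at this
    obtain ⟨u, hu, hdu⟩ := Finset.mem_image.mp this
    exact ⟨u, hu, hdu⟩
  have hwex : ∀ i : Fin k, ∃ u, u ∈ Ws ∧ degf u = k - i.val := by
    intro i
    have : k - i.val ∈ Finset.Icc 1 k := by
      rw [Finset.mem_Icc]
      have := i.isLt
      omega
    rw [← himW] at this
    obtain ⟨u, hu, hdu⟩ := Finset.mem_image.mp this
    exact ⟨u, hu, hdu⟩
  set b : Fin k → V := fun i => (hbex i).choose with hbdef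
  set w : Fin k → V := fun i => (hwex i).choose with hwdef
  have hbB : ∀ i, b i ∈ B := fun i => (hbex i).choose_spec.1
  have hbdeg : ∀ i, degf (b i) = k - i.val := fun i => (hbex i).choose_spec.2
  have hwW : ∀ i, w i ∈ Ws := fun i => (hwex i).choose_spec.1
  have hwdeg : ∀ i, degf (w i) = k - i.val := fun i => (hwex i).choose_spec.2
  refine ⟨k, ?_, b, w, ?_, ?_, ?_, ?_, ?_, ?_, ?_⟩
  · -- cardinality
    have := Finset.card_filter_add_card_filter_not (s := Finset.univ)
      (p := fun v : V => c v = 0)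
    have hWeq : Finset.univ.filter (fun v : V => ¬ (c v = 0)) = Ws := by
      ext v
      simp only [Finset.mem_filter, Finset.mem_univ, true_and, hWdef]
      rcases fin2 (c v) with h | h <;> simp [h]
    rw [hWeq] at this
    rw [← Finset.card_univ, ← this, ← hBdef, hWk]
    omega
  · -- b injective
    intro i j hij
    have := hbdeg i
    rw [hij, hbdeg j] at this
    have hi := i.isLt
    have hj := j.isLt
    exact Fin.ext (by omega)
  · intro i j hij
    have := hwdeg i
    rw [hij, hwdeg j] at this
    have hi := i.isLt
    have hj := j.isLt
    exact Fin.ext (by omega)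
  · -- b i ≠ w j
    intro i j h
    have h1 := (hmemB _).mp (hbB i)
    have h2 := (hmemW _).mp (hwW j)
    rw [h] at h1
    rw [h1] at h2
    exact absurd h2 (by decide)
  · -- cover
    intro x
    rcases hcover x with hx | hx
    · left
      have hd1 : 1 ≤ degf x := hdegpos x
      have hdk : degf x ≤ k := by
        have := hdegB x hx; rw [Finset.mem_Icc, hWk] at this; omega
      refine ⟨⟨k - degf x, by omega⟩, ?_⟩
      apply hdeginj
      · exact hsamecol _ _ (Or.inl ⟨hx, hbB _⟩)
      · rw [hbdeg]
        simp only []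
        omega
    · right
      have hd1 : 1 ≤ degf x := hdegpos x
      have hdk : degf x ≤ k := by
        have := hdegWs x hx; rw [Finset.mem_Icc] at this; omega
      refine ⟨⟨k - degf x, by omega⟩, ?_⟩
      apply hdeginj
      · exact hsamecol _ _ (Or.inr ⟨hx, hwW _⟩)
      · rw [hwdeg]
        simp only []
        omega
  · -- no b-b edges
    intro i j hadj
    exact c.valid hadj (hsamecol _ _ (Or.inl ⟨hbB i, hbB j⟩))
  · intro i j hadj
    exact c.valid hadj (hsamecol _ _ (Or.inr ⟨hwW i, hwW j⟩))
  · -- adjacency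
    intro i j
    rw [hkey (b i) (hbB i) (w j) (hwW j), hbdeg, hwdeg]
    have hi := i.isLt
    have hj := j.isLt
    omega


theorem reverse {V : Type*} (G : SimpleGraph V) {k : ℕ} (b w : Fin k → V)
    (hcov : ∀ x : V, (∃ i, x = b i) ∨ (∃ i, x = w i))
    (hbb : ∀ i j, ¬ G.Adj (b i) (b j))
    (hww : ∀ i j, ¬ G.Adj (w i) (w j))
    (hbw : ∀ i j, G.Adj (b i) (w j) ↔ i.val + j.val < k) :
    G.Colorable 2 ∧ G.IndFree (pathGraph 5) := by
  classical
  constructor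
  · refine ⟨Coloring.mk (fun x => if (∃ i, x = b i) then 0 else 1) ?_⟩
    intro x y hadj
    by_cases hx : ∃ i, x = b i <;> by_cases hy : ∃ i, y = b i <;>
      simp only [hx, hy, if_pos, if_neg]
    · obtain ⟨i, rfl⟩ := hx
      obtain ⟨j, rfl⟩ := hy
      exact absurd hadj (hbb i j)
    · simp
    · simp
    · rcases hcov x with h | ⟨i, rfl⟩
      · exact absurd h hx
      rcases hcov y with h | ⟨j, rfl⟩
      · exact absurd h hy
      exact absurd hadj (hww i j)
  · constructor
    intro f
    have hwb : ∀ i j, G.Adj (w i) (b j) ↔ j.val + i.val < k := by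
      intro i j
      rw [G.adj_comm]
      exact hbw j i
    have hbbf : ∀ i j, G.Adj (b i) (b j) ↔ False := by simp only [hbb, iff_false]; tauto
    have hwwf : ∀ i j, G.Adj (w i) (w j) ↔ False := by simp only [hww, iff_false]; tauto
    have hadj : ∀ m n : Fin 5, (pathGraph 5).Adj m n → G.Adj (f m) (f n) :=
      fun m n h => f.map_rel_iff.mpr h
    have hnadj : ∀ m n : Fin 5, ¬ (pathGraph 5).Adj m n → ¬ G.Adj (f m) (f n) :=
      fun m n h hc => h (f.map_rel_iff.mp hc)
    have h01 := hadj 0 1 (by rw [pathGraph_adj]; decide)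
    have h12 := hadj 1 2 (by rw [pathGraph_adj]; decide)
    have h23 := hadj 2 3 (by rw [pathGraph_adj]; decide)
    have h34 := hadj 3 4 (by rw [pathGraph_adj]; decide)
    have n02 := hnadj 0 2 (by rw [pathGraph_adj]; decide)
    have n03 := hnadj 0 3 (by rw [pathGraph_adj]; decide)
    have n04 := hnadj 0 4 (by rw [pathGraph_adj]; decide)
    have n13 := hnadj 1 3 (by rw [pathGraph_adj]; decide)
    have n14 := hnadj 1 4 (by rw [pathGraph_adj]; decide)
    have n24 := hnadj 2 4 (by rw [pathGraph_adj]; decide)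
    rcases hcov (f 0) with ⟨i0, e0⟩ | ⟨i0, e0⟩ <;>
    rcases hcov (f 1) with ⟨i1, e1⟩ | ⟨i1, e1⟩ <;>
    rcases hcov (f 2) with ⟨i2, e2⟩ | ⟨i2, e2⟩ <;>
    rcases hcov (f 3) with ⟨i3, e3⟩ | ⟨i3, e3⟩ <;>
    rcases hcov (f 4) with ⟨i4, e4⟩ | ⟨i4, e4⟩ <;>
    rw [e0, e1] at h01 <;> rw [e1, e2] at h12 <;> rw [e2, e3] at h23 <;>
    rw [e3, e4] at h34 <;> rw [e0, e2] at n02 <;> rw [e0, e3] at n03 <;>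
    rw [e0, e4] at n04 <;> rw [e1, e3] at n13 <;> rw [e1, e4] at n14 <;>
    rw [e2, e4] at n24 <;>
    simp only [hbbf, hwwf, hbw, hwb] at h01 h12 h23 h34 n02 n03 n04 n13 n14 n24 <;>
    omega


open SimpleGraph in
theorem stmt10 {V : Type*} [Fintype V] (G : SimpleGraph V) (hp : G.IsPrime) :
    (G.Colorable 2 ∧ G.IndFree (pathGraph 5)) ↔
      ∃ k : ℕ, Fintype.card V = 2 * k ∧
        ∃ b w : Fin k → V,
          Function.Injective b ∧ Function.Injective w ∧
          (∀ i j, b i ≠ w j) ∧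
          (∀ x : V, (∃ i, x = b i) ∨ (∃ i, x = w i)) ∧
          (∀ i j, ¬ G.Adj (b i) (b j)) ∧
          (∀ i j, ¬ G.Adj (w i) (w j)) ∧
          (∀ i j, G.Adj (b i) (w j) ↔ i.val + j.val < k) := by
  constructor
  · rintro ⟨hc2, hF⟩
    obtain ⟨c⟩ := hc2
    exact forward G hp c hF
  · rintro ⟨k, hcard, b, w, hbinj, hwinj, hdisj, hcov, hbb, hww, hbw⟩
    exact reverse G b w hcov hbb hww hbw
end

section
/- The half-graph on 2m vertices with m ≥ 2 (B = {b_1,...,b_m}, W = {w_1,...,w_m}, b_i adjacent to w_j iff i + j ≤ m + 1) is prime: its only modules are the empty set, singletons, and the full vertex set. -/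
open SimpleGraph

lemma hg_adj_lr (m : ℕ) (i j : Fin m) :
    (halfGraph m).Adj (Sum.inl i) (Sum.inr j) ↔ i.val + j.val < m := by
  simp [halfGraph]

lemma hg_adj_rl (m : ℕ) (i j : Fin m) :
    (halfGraph m).Adj (Sum.inr j) (Sum.inl i) ↔ i.val + j.val < m := by
  rw [adj_comm]; exact hg_adj_lr m i j

lemma hg_not_ll (m : ℕ) (i i' : Fin m) :
    ¬ (halfGraph m).Adj (Sum.inl i) (Sum.inl i') := by
  simp [halfGraph]

lemma hg_not_rr (m : ℕ) (j j' : Fin m) :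
    ¬ (halfGraph m).Adj (Sum.inr j) (Sum.inr j') := by
  simp [halfGraph]

lemma hg_mixed (m : ℕ) (M : Set (Fin m ⊕ Fin m))
    (hM : (halfGraph m).IsModule M) (i j : Fin m)
    (hi : Sum.inl i ∈ M) (hj : Sum.inr j ∈ M) : M = Set.univ := by
  have hm0 : 0 < m := i.pos
  have hiv := i.isLt
  have hjv := j.isLt
  set z0 : Fin m := ⟨0, hm0⟩ with hz0
  have hw0 : Sum.inr z0 ∈ M := by
    by_contra h
    rcases hM _ h with h1 | h1
    · exact hg_not_rr m z0 j (h1 _ hj)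
    · exact h1 _ hi ((hg_adj_rl m i z0).mpr (by simp only [hz0, Fin.val_mk]; omega))
  have hb : ∀ k : Fin m, Sum.inl k ∈ M := by
    intro k
    by_contra h
    rcases hM _ h with h1 | h1
    · exact hg_not_ll m k i (h1 _ hi)
    · exact h1 _ hw0 ((hg_adj_lr m k z0).mpr (by simp only [hz0, Fin.val_mk]; have := k.isLt; omega))
  have hw : ∀ l : Fin m, Sum.inr l ∈ M := by
    intro l
    by_contra h
    rcases hM _ h with h1 | h1
    · exact hg_not_rr m l j (h1 _ hj)
    · exact h1 _ (hb z0) ((hg_adj_rl m z0 l).mpr (by simp only [hz0, Fin.val_mk]; have := l.isLt; omega))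
  ext v
  cases v with
  | inl k => simp [hb k]
  | inr l => simp [hw l]

lemma hg_twoL (m : ℕ) (M : Set (Fin m ⊕ Fin m))
    (hM : (halfGraph m).IsModule M) (i i' : Fin m) (h : i.val < i'.val)
    (hi : Sum.inl i ∈ M) (hi' : Sum.inl i' ∈ M) : M = Set.univ := by
  have hiv := i.isLt
  have hiv' := i'.isLt
  set w : Fin m := ⟨m - 1 - i.val, by omega⟩ with hw
  have hwm : Sum.inr w ∈ M := by
    by_contra h'
    rcases hM _ h' with h1 | h1
    · have := (hg_adj_rl m i' w).mp (h1 _ hi')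
      simp only [hw] at this
      omega
    · exact h1 _ hi ((hg_adj_rl m i w).mpr (by simp only [hw]; omega))
  exact hg_mixed m M hM i w hi hwm

lemma hg_twoR (m : ℕ) (M : Set (Fin m ⊕ Fin m))
    (hM : (halfGraph m).IsModule M) (j j' : Fin m) (h : j.val < j'.val)
    (hj : Sum.inr j ∈ M) (hj' : Sum.inr j' ∈ M) : M = Set.univ := by
  have hjv := j.isLt
  have hjv' := j'.isLt
  set b : Fin m := ⟨m - 1 - j.val, by omega⟩ with hb
  have hbm : Sum.inl b ∈ M := by
    by_contra h'
    rcases hM _ h' with h1 | h1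
    · have := (hg_adj_lr m b j').mp (h1 _ hj')
      simp only [hb] at this
      omega
    · exact h1 _ hj ((hg_adj_lr m b j).mpr (by simp only [hb]; omega))
  exact hg_mixed m M hM b j hbm hj

open SimpleGraph in
theorem stmt13 (m : ℕ) (hm : 2 ≤ m) : (halfGraph m).IsPrime := by
  constructor
  · simp only [Fintype.card_sum, Fintype.card_fin]
    omega
  · intro M hM
    by_cases h2 : ∃ x ∈ M, ∃ y ∈ M, x ≠ y
    · right; right
      obtain ⟨x, hx, y, hy, hxy⟩ := h2
      cases x with
      | inl i =>
        cases y with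
        | inl i' =>
          have hne : i.val ≠ i'.val := by
            intro hc
            exact hxy (by rw [Fin.val_injective hc])
          rcases lt_or_gt_of_ne hne with hlt | hgt
          · exact hg_twoL m M hM i i' hlt hx hy
          · exact hg_twoL m M hM i' i hgt hy hx
        | inr j => exact hg_mixed m M hM i j hx hy
      | inr j =>
        cases y with
        | inl i => exact hg_mixed m M hM i j hy hx
        | inr j' =>
          have hne : j.val ≠ j'.val := by
            intro hc
            exact hxy (by rw [Fin.val_injective hc])
          rcases lt_or_gt_of_ne hne with hlt | hgt
          · exact hg_twoR m M hM j j' hlt hx hy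
          · exact hg_twoR m M hM j' j hgt hy hx
    · push_neg at h2
      rcases M.eq_empty_or_nonempty with h | ⟨x, hx⟩
      · left; exact h
      · right; left
        exact ⟨x, Set.eq_singleton_iff_unique_mem.mpr ⟨hx, fun y hy => h2 y hy x hx⟩⟩
end
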